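/- arXiv:1106.3836 — 8 statements merged into one kernel-verified Lean document; each statement's English description precedes it below -/
import Mathlib

section
/- If G is a non-locally compact paratopological group and bG is a Hausdorff compactification of G such that the remainder Y = bG \ G does not have the Baire property, then Y is Lindelöf and meager. -/
open Set

open Topology Filter


section Helpers

variable {B : Type*} [TopologicalSpace B]

lemma open_subset_closure_inter {D O : Set B} (hD : Dense D) (hO : IsOpen O) :
    O ⊆ closure (O ∩ D) := by
  intro x hx
  rw [mem_closure_iff]
  intro V hV hxV
  have : (V ∩ O).Nonempty ∧ IsOpen (V ∩ O) := ⟨⟨x, hxV, hx⟩, hV.inter hO⟩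
  obtain ⟨z, hz1, hz2⟩ := hD.inter_open_nonempty _ this.2 this.1
  exact ⟨z, hz1.1, hz1.2, hz2⟩

lemma mem_closure_inter_open {S U : Set B} {y : B} (hU : IsOpen U) (hy : y ∈ U)
    (h : y ∈ closure S) : y ∈ closure (S ∩ U) := by
  rw [mem_closure_iff] at h ⊢
  intro V hV hyV
  obtain ⟨z, hz1, hz2⟩ := h (V ∩ U) (hV.inter hU) ⟨hyV, hy⟩
  exact ⟨z, hz1.1, hz2, hz1.2⟩

/-- If every open set meeting `Y` has a further open subset meeting `Y` whose `Y`-part misses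
`closure (T ∩ Y)`, i.e. if `T ∩ Y` is "nowhere dense relative to Y", then the preimage of `T`
in the subtype `Y` is nowhere dense. -/
lemma isNowhereDense_preimage_val {Y T : Set B}
    (h : ∀ O : Set B, IsOpen O → (O ∩ Y).Nonempty → ¬(O ∩ Y ⊆ closure (T ∩ Y))) :
    IsNowhereDense ((Subtype.val ⁻¹' T) : Set Y) := by
  rw [IsNowhereDense]
  by_contra hne
  obtain ⟨x, hx⟩ := nonempty_iff_ne_empty.2 hne
  have hio : IsOpen (interior (closure ((Subtype.val ⁻¹' T) : Set Y))) := isOpen_interior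
  rw [isOpen_induced_iff] at hio
  obtain ⟨O, hOo, hOe⟩ := hio
  refine h O hOo ⟨x.1, ?_, x.2⟩ ?_
  · have : x ∈ Subtype.val ⁻¹' O := by rw [show (Subtype.val ⁻¹' O : Set Y) = _ from hOe]; exact hx
    exact this
  · rintro y ⟨hyO, hyY⟩
    have hmem : (⟨y, hyY⟩ : Y) ∈ interior (closure ((Subtype.val ⁻¹' T) : Set Y)) := by
      rw [← hOe]; exact hyO
    have h2 : (⟨y, hyY⟩ : Y) ∈ closure ((Subtype.val ⁻¹' T) : Set Y) := interior_subset hmem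
    have h3 : y ∈ closure (Subtype.val '' ((Subtype.val ⁻¹' T) : Set Y)) := by
      have := image_closure_subset_closure_image (continuous_subtype_val (p := (· ∈ Y)))
        (mem_image_of_mem _ h2)
      exact this
    rw [Subtype.image_preimage_coe] at h3; rwa [inter_comm]

end Helpers

section Meagre

variable {B : Type*} [TopologicalSpace B]

/-- Banach-category style argument: if a dense set `Yᶜ`-complement... :
if `Y` is dense and every nonempty open set contains a nonempty open "witness" `W`
carrying countably many dense open sets whose intersection with `W` avoids `Y`,
then `Y` (with the subspace topology) is meagre in itself. -/
theorem meagre_of_witnesses (Y : Set B) (hYd : Dense Y)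
    (hwit : ∀ O : Set B, IsOpen O → O.Nonempty →
      ∃ W, W ⊆ O ∧ IsOpen W ∧ W.Nonempty ∧
        ∃ E : ℕ → Set B, (∀ n, IsOpen (E n)) ∧ (∀ n, Dense (E n)) ∧ (W ∩ ⋂ n, E n) ⊆ Yᶜ) :
    IsMeagre (Set.univ : Set Y) := by
  classical
  -- witness predicate
  set Wit : Set B → Prop := fun W => IsOpen W ∧ W.Nonempty ∧
    ∃ E : ℕ → Set B, (∀ n, IsOpen (E n)) ∧ (∀ n, Dense (E n)) ∧ (W ∩ ⋂ n, E n) ⊆ Yᶜ with hWit_def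
  -- maximal pairwise disjoint family of witnesses
  set 𝒮 : Set (Set (Set B)) := {A | (∀ W ∈ A, Wit W) ∧ A.PairwiseDisjoint id} with h𝒮_def
  obtain ⟨A, hA⟩ : ∃ A, Maximal (· ∈ 𝒮) A := by
    apply zorn_subset
    intro c hc hchain
    refine ⟨⋃₀ c, ⟨?_, ?_⟩, fun s hs => subset_sUnion_of_mem hs⟩
    · rintro W ⟨A₀, hA₀, hW⟩
      exact (hc hA₀).1 W hW
    · rintro W₁ ⟨A₁, hA₁, hW₁⟩ W₂ ⟨A₂, hA₂, hW₂⟩ hne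
      rcases hchain.total hA₁ hA₂ with h | h
      · exact (hc hA₂).2 (h hW₁) hW₂ hne
      · exact (hc hA₁).2 hW₁ (h hW₂) hne
  have hAwit : ∀ W ∈ A, Wit W := hA.prop.1
  have hAdisj : A.PairwiseDisjoint id := hA.prop.2
  set D : Set B := ⋃₀ A with hD_def
  have hDo : IsOpen D := isOpen_sUnion (fun W hW => (hAwit W hW).1)
  -- D is dense
  have hDd : Dense D := by
    by_contra hnd
    rw [dense_iff_inter_open] at hnd
    push_neg at hnd
    obtain ⟨O, hOo, hOne, hOD⟩ := hnd
    obtain ⟨W, hWO, hWo, hWne, hWE⟩ := hwit O hOo hOne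
    have hWD : W ∩ D = ∅ := by
      rw [← subset_empty_iff, ← hOD]
      exact inter_subset_inter_left _ hWO
    have hWnotin : W ∉ A := by
      intro hmem
      have : W ⊆ D := subset_sUnion_of_mem hmem
      obtain ⟨x, hx⟩ := hWne
      exact absurd (show x ∈ W ∩ D from ⟨hx, this hx⟩) (by rw [hWD]; exact id)
    have hins : insert W A ∈ 𝒮 := by
      constructor
      · rintro V (rfl | hV)
        · exact ⟨hWo, hWne, hWE⟩
        · exact hAwit V hV
      · have hdisjW : ∀ V ∈ A, Disjoint (id W) (id V) := by
          intro V hV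
          refine Set.disjoint_left.2 fun x hx1 hx2 => ?_
          have hxD : x ∈ W ∩ D := ⟨hx1, ⟨V, hV, hx2⟩⟩
          rw [hWD] at hxD; exact hxD
        intro V₁ hV₁ V₂ hV₂ hne
        rcases hV₁ with rfl | hV₁ <;> rcases hV₂ with rfl | hV₂
        · exact absurd rfl hne
        · exact hdisjW V₂ hV₂
        · exact (hdisjW V₁ hV₁).symm
        · exact hAdisj hV₁ hV₂ hne
    have := hA.2 hins (subset_insert W A)
    exact hWnotin (this (mem_insert W A))
  -- choose the dense open families
  set F : Set B → (ℕ → Set B) := fun W => if h : Wit W then h.2.2.choose else fun _ => univ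
      with hF_def
  have hFspec : ∀ W, Wit W → (∀ n, IsOpen (F W n)) ∧ (∀ n, Dense (F W n)) ∧
      (W ∩ ⋂ n, F W n) ⊆ Yᶜ := by
    intro W h
    simp only [hF_def, dif_pos h]
    exact h.2.2.choose_spec
  -- the nowhere dense pieces
  set Fn : ℕ → Set B := fun n => ⋃ W ∈ A, (W \ F W n) ∩ Y with hFn_def
  have hFnY : ∀ n, Fn n ⊆ Y := by
    intro n x hx
    simp only [hFn_def, mem_iUnion] at hx
    obtain ⟨W, hW, hx⟩ := hx
    exact hx.2
  have hFnD : ∀ n, Fn n ⊆ D := by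
    intro n x hx
    simp only [hFn_def, mem_iUnion] at hx
    obtain ⟨W, hW, hx⟩ := hx
    exact ⟨W, hW, hx.1.1⟩
  -- each piece is nowhere dense in Y
  have hFnnwd : ∀ n, IsNowhereDense ((Subtype.val ⁻¹' (Fn n)) : Set Y) := by
    intro n
    apply isNowhereDense_preimage_val
    intro O₁ hO₁o hO₁ne hsub
    -- O₁ ⊆ closure D, so O₁ meets D, i.e. meets some W ∈ A
    have hO₁ne' : O₁.Nonempty := ⟨hO₁ne.choose, hO₁ne.choose_spec.1⟩
    have h1 : O₁ ⊆ closure (Fn n ∩ Y) := by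
      calc O₁ ⊆ closure (O₁ ∩ Y) := open_subset_closure_inter hYd hO₁o
        _ ⊆ closure (closure (Fn n ∩ Y)) := closure_mono hsub
        _ = closure (Fn n ∩ Y) := closure_closure
    have h2 : O₁ ⊆ closure D := h1.trans (closure_mono (fun x hx => hFnD n hx.1))
    obtain ⟨z, hzO, hzD⟩ : (O₁ ∩ D).Nonempty := by
      obtain ⟨x, hx⟩ := hO₁ne'
      have := h2 hx
      rw [mem_closure_iff] at this
      obtain ⟨z, hz⟩ := this O₁ hO₁o hx
      exact ⟨z, hz.1, hz.2⟩
    obtain ⟨W, hWA, hzW⟩ := hzD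
    have hWo : IsOpen W := (hAwit W hWA).1
    set O₂ : Set B := O₁ ∩ W with hO₂_def
    have hO₂o : IsOpen O₂ := hO₁o.inter hWo
    have hO₂ne : O₂.Nonempty := ⟨z, hzO, hzW⟩
    -- O₂ ∩ Y ⊆ (F W n)ᶜ
    have hkey : O₂ ∩ Y ⊆ (F W n)ᶜ := by
      rintro y ⟨hyO₂, hyY⟩
      have hy1 : y ∈ closure (Fn n ∩ Y) := h1 hyO₂.1
      have hy2 : y ∈ closure ((Fn n ∩ Y) ∩ W) := mem_closure_inter_open hWo hyO₂.2 hy1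
      have hy3 : (Fn n ∩ Y) ∩ W ⊆ (W \ F W n) ∩ Y := by
        rintro b ⟨⟨hb1, hb2⟩, hb3⟩
        simp only [hFn_def, mem_iUnion] at hb1
        obtain ⟨W', hW'A, hb1⟩ := hb1
        by_cases hWW : W' = W
        · subst hWW; exact ⟨hb1.1, hb2⟩
        · exfalso
          exact Set.disjoint_left.1 (hAdisj hW'A hWA hWW) hb1.1.1 hb3
      have hy4 : y ∈ closure ((W \ F W n) ∩ Y) := closure_mono hy3 hy2
      have hy5 : closure ((W \ F W n) ∩ Y) ⊆ (F W n)ᶜ := by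
        apply closure_minimal
        · rintro b ⟨⟨_, hb⟩, _⟩; exact hb
        · exact isClosed_compl_iff.2 ((hFspec W (hAwit W hWA)).1 n)
      exact hy5 hy4
    -- contradiction with density of F W n
    have : O₂ ⊆ (F W n)ᶜ := by
      calc O₂ ⊆ closure (O₂ ∩ Y) := open_subset_closure_inter hYd hO₂o
        _ ⊆ closure ((F W n)ᶜ) := closure_mono hkey
        _ = (F W n)ᶜ := ((isClosed_compl_iff.2 ((hFspec W (hAwit W hWA)).1 n)).closure_eq)
    obtain ⟨x, hx1, hx2⟩ := ((hFspec W (hAwit W hWA)).2.1 n).inter_open_nonempty O₂ hO₂o hO₂ne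
    exact (this hx1) hx2
  -- the boundary piece
  have hbd : IsNowhereDense ((Subtype.val ⁻¹' Dᶜ) : Set Y) := by
    apply isNowhereDense_preimage_val
    intro O₁ hO₁o hO₁ne hsub
    have h1 : O₁ ⊆ Dᶜ := by
      calc O₁ ⊆ closure (O₁ ∩ Y) := open_subset_closure_inter hYd hO₁o
        _ ⊆ closure (closure (Dᶜ ∩ Y)) := closure_mono hsub
        _ = closure (Dᶜ ∩ Y) := closure_closure
        _ ⊆ closure (Dᶜ) := closure_mono inter_subset_left
        _ = Dᶜ := (hDo.isClosed_compl).closure_eq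
    obtain ⟨x, hx1, hx2⟩ := hDd.inter_open_nonempty O₁ hO₁o ⟨hO₁ne.choose, hO₁ne.choose_spec.1⟩
    exact (h1 hx1) hx2
  -- assemble
  rw [isMeagre_iff_countable_union_isNowhereDense]
  refine ⟨(range fun n => ((Subtype.val ⁻¹' (Fn n)) : Set Y)) ∪ {(Subtype.val ⁻¹' Dᶜ : Set Y)},
    ?_, ?_, ?_⟩
  · rintro t (⟨n, rfl⟩ | rfl)
    · exact hFnnwd n
    · exact hbd
  · exact (countable_range _).union (countable_singleton _)
  · rintro ⟨y, hyY⟩ -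
    by_cases hyD : y ∈ D
    · obtain ⟨W, hWA, hyW⟩ := hyD
      have : ∃ n, y ∉ F W n := by
        by_contra hall
        push_neg at hall
        have : y ∈ W ∩ ⋂ n, F W n := ⟨hyW, mem_iInter.2 hall⟩
        exact ((hFspec W (hAwit W hWA)).2.2 this) hyY
      obtain ⟨n, hn⟩ := this
      refine mem_sUnion.2 ⟨_, Or.inl ⟨n, rfl⟩, ?_⟩
      show y ∈ Fn n
      simp only [hFn_def, mem_iUnion]
      exact ⟨W, hWA, ⟨⟨hyW, hn⟩, hyY⟩⟩
    · exact mem_sUnion.2 ⟨_, Or.inr rfl, hyD⟩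

end Meagre

section Machine

variable {G B : Type*} [TopologicalSpace G] [Group G] [ContinuousMul G]
  [TopologicalSpace B] [CompactSpace B] [T2Space B]


theorem isLindelof_compl_range_of_witness (e : G → B) (he : Topology.IsEmbedding e)
    (hd : DenseRange e)
    (W : Set B) (hWo : IsOpen W) (hWne : W.Nonempty)
    (E : ℕ → Set B) (hEo : ∀ n, IsOpen (E n)) (hEd : ∀ n, Dense (E n))
    (hres : (W ∩ ⋂ n, E n) ⊆ Set.range e) :
    IsLindelof ((Set.range e)ᶜ : Set B) := by
  classical
  -- a base point in the residual part
  have hdense : Dense (⋂ n, E n) := dense_iInter_of_isOpen_nat hEo hEd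
  obtain ⟨p, hpW, hpE⟩ : (W ∩ ⋂ n, E n).Nonempty := hdense.inter_open_nonempty W hWo hWne
  obtain ⟨p₀, hp₀⟩ : p ∈ Set.range e := hres ⟨hpW, hpE⟩
  -- a shrinking sequence of open neighborhoods of p
  have step : ∀ U : Set B, IsOpen U → p ∈ U →
      ∃ S : Set B, IsOpen S ∧ p ∈ S ∧ closure S ⊆ U := by
    intro U hUo hpU
    obtain ⟨C, hC1, hC2, hC3⟩ := exists_mem_nhds_isClosed_subset (hUo.mem_nhds hpU)
    exact ⟨interior C, isOpen_interior, mem_interior_iff_mem_nhds.2 hC1,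
      (closure_minimal interior_subset hC2).trans hC3⟩
  set g : Set B → Set B := fun U => if h : IsOpen U ∧ p ∈ U then (step U h.1 h.2).choose else ∅
    with hg
  have hgspec : ∀ U, IsOpen U → p ∈ U → IsOpen (g U) ∧ p ∈ g U ∧ closure (g U) ⊆ U := by
    intro U h1 h2
    simp only [hg, dif_pos (show IsOpen U ∧ p ∈ U from ⟨h1, h2⟩)]
    exact (step U h1 h2).choose_spec
  set Sq : ℕ → Set B := fun n => Nat.rec (g (W ∩ E 0)) (fun n S => g (S ∩ E (n + 1))) n with hSq
  have hSqs : ∀ n, Sq (n + 1) = g (Sq n ∩ E (n + 1)) := fun n => rfl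
  have hSqP : ∀ n, IsOpen (Sq n) ∧ p ∈ Sq n ∧ closure (Sq n) ⊆ W ∧ closure (Sq n) ⊆ E n := by
    intro n
    induction n with
    | zero =>
      have h := hgspec (W ∩ E 0) (hWo.inter (hEo 0)) ⟨hpW, (mem_iInter.1 hpE) 0⟩
      exact ⟨h.1, h.2.1, fun x hx => (h.2.2 hx).1, fun x hx => (h.2.2 hx).2⟩
    | succ n ih =>
      have h := hgspec (Sq n ∩ E (n + 1)) (ih.1.inter (hEo (n + 1)))
        ⟨ih.2.1, (mem_iInter.1 hpE) (n + 1)⟩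
      rw [← hSqs n] at h
      exact ⟨h.1, h.2.1,
        fun x hx => ih.2.2.1 (subset_closure ((h.2.2 hx).1)),
        fun x hx => (h.2.2 hx).2⟩
  have hSqsub : ∀ n, closure (Sq (n + 1)) ⊆ Sq n := by
    intro n
    have h := hgspec (Sq n ∩ E (n + 1)) ((hSqP n).1.inter (hEo (n + 1)))
      ⟨(hSqP n).2.1, (mem_iInter.1 hpE) (n + 1)⟩
    rw [← hSqs n] at h
    exact fun x hx => (h.2.2 hx).1
  have hSqanti : ∀ m n, m ≤ n → Sq n ⊆ Sq m := by
    have h1 : ∀ n, Sq (n + 1) ≤ Sq n := fun n => subset_closure.trans (hSqsub n)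
    intro m n hmn
    exact antitone_nat_of_succ_le h1 hmn
  -- the main construction: compact subsets of `range e` are contained in Gδ subsets of `range e`
  have main : ∀ CC : Set B, IsCompact CC → CC ⊆ Set.range e →
      ∃ U : ℕ → Set B, (∀ n, IsOpen (U n)) ∧ (∀ n, CC ⊆ U n) ∧ (⋂ n, U n) ⊆ Set.range e := by
    intro CC hCCc hCCr
    have hC₀ : IsCompact (e ⁻¹' CC) := he.isCompact_iff.2 (by
      rw [Set.image_preimage_eq_of_subset hCCr]; exact hCCc)
    -- translated windows
    have hVng : ∀ (n : ℕ) (a : G), ∃ Ag : Set B, IsOpen Ag ∧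
        e ⁻¹' Ag = (fun x => (a * p₀⁻¹) * x) '' (e ⁻¹' Sq n) := by
      intro n a
      have hopen : IsOpen ((fun x => (a * p₀⁻¹) * x) '' (e ⁻¹' Sq n)) := by
        have := (Homeomorph.mulLeft (a * p₀⁻¹)).isOpenMap _
          ((hSqP n).1.preimage he.continuous)
        simpa using this
      exact (he.toIsInducing.isOpen_iff).1 hopen
    choose Aset hAopen hAtrace using hVng
    have hmemA : ∀ (n : ℕ) (a : G), e a ∈ Aset n a := by
      intro n a
      rw [← mem_preimage, hAtrace]
      refine ⟨p₀, ?_, show a * p₀⁻¹ * p₀ = a from inv_mul_cancel_right a p₀⟩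
      rw [mem_preimage, hp₀]
      exact (hSqP n).2.1
    -- finite subcovers
    have hcov : ∀ n, ∃ t : Finset (e ⁻¹' CC), CC ⊆ ⋃ a ∈ t, Aset n (a : G) := by
      intro n
      apply hCCc.elim_finite_subcover (fun a : (e ⁻¹' CC) => Aset n (a : G))
        (fun a => hAopen n (a : G))
      intro c hc
      obtain ⟨a, ha⟩ := hCCr hc
      refine mem_iUnion.2 ⟨⟨a, by rw [mem_preimage, ha]; exact hc⟩, ?_⟩
      show c ∈ Aset n a
      rw [← ha]
      exact hmemA n a
    choose tfin htfin using hcov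
    set U : ℕ → Set B := fun n => ⋃ a ∈ tfin n, Aset n (a : G) with hU
    refine ⟨U, fun n => isOpen_biUnion (fun a _ => hAopen n _), htfin, ?_⟩
    -- the residual argument
    intro y hy
    by_contra hyr
    have hsel : ∀ n, ∃ a : (e ⁻¹' CC), a ∈ tfin n ∧ y ∈ Aset n (a : G) := by
      intro n
      have := mem_iInter.1 hy n
      simpa only [hU, mem_iUnion, exists_prop] using this
    choose gsel hgsel₁ hgsel₂ using hsel
    set hfun : ℕ → G := fun n => (gsel n : G) * p₀⁻¹ with hhfun
    set T : ℕ → Set B → Set (G × G) := fun m N =>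
      {q | ∃ n, m ≤ n ∧ q.1 = hfun n ∧ q.2 ∈ e ⁻¹' Sq n ∧ e (q.1 * q.2) ∈ N} with hT
    have hTne : ∀ (m : ℕ) (N : Set B), N ∈ 𝓝 y → (T m N).Nonempty := by
      intro m N hN
      obtain ⟨O, hON, hOo, hyO⟩ := mem_nhds_iff.1 hN
      have hm : m ≤ m := le_rfl
      have hint : (Aset m (gsel m : G) ∩ O).Nonempty := ⟨y, hgsel₂ m, hyO⟩
      obtain ⟨x0, hx0⟩ := hd.exists_mem_open ((hAopen m _).inter hOo) hint
      have hx0' : x0 ∈ e ⁻¹' (Aset m (gsel m : G)) := hx0.1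
      rw [hAtrace] at hx0'
      obtain ⟨x, hx, hxe⟩ := hx0'
      refine ⟨(hfun m, x), m, le_rfl, rfl, hx, ?_⟩
      show e (hfun m * x) ∈ N
      have : hfun m * x = x0 := hxe
      rw [this]
      exact hON hx0.2
    -- build the ultrafilter
    set idx := ℕ × {N : Set B // N ∈ 𝓝 y} with hidx
    haveI : Nonempty idx := ⟨⟨0, ⟨univ, univ_mem⟩⟩⟩
    set 𝔽 : Filter (G × G) := ⨅ i : idx, 𝓟 (T i.1 i.2) with h𝔽
    have hdir : Directed (· ≥ ·) (fun i : idx => 𝓟 (T i.1 (i.2 : Set B))) := by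
      rintro ⟨m₁, N₁, hN₁⟩ ⟨m₂, N₂, hN₂⟩
      refine ⟨⟨max m₁ m₂, ⟨N₁ ∩ N₂, inter_mem hN₁ hN₂⟩⟩, ?_, ?_⟩ <;>
        · simp only [ge_iff_le, le_principal_iff, mem_principal]
          rintro q ⟨n, hn, h1, h2, h3⟩
          exact ⟨n, by omega, h1, h2, by first | exact h3.1 | exact h3.2⟩
    haveI h𝔽ne : 𝔽.NeBot := iInf_neBot_of_directed' hdir
      (fun i => Filter.principal_neBot_iff.2 (hTne i.1 (i.2 : Set B) i.2.2))
    set 𝒰 : Ultrafilter (G × G) := Ultrafilter.of 𝔽 with h𝒰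
    have memT : ∀ (m : ℕ) (N : Set B), N ∈ 𝓝 y → T m N ∈ 𝒰 := by
      intro m N hN
      have h1 : (𝒰 : Filter (G × G)) ≤ 𝔽 := Ultrafilter.of_le 𝔽
      have h2 : 𝔽 ≤ 𝓟 (T m N) := iInf_le (fun i : idx => 𝓟 (T i.1 (i.2 : Set B))) ⟨m, ⟨N, hN⟩⟩
      exact le_principal_iff.1 (h1.trans h2)
    -- first coordinate converges to a point of `range e`
    set S₁ : Set B := e '' ((fun x => x * p₀⁻¹) '' (e ⁻¹' CC)) with hS₁
    have hS₁c : IsCompact S₁ := (hC₀.image (continuous_mul_right p₀⁻¹)).image he.continuous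
    have hS₁mem : (fun q : G × G => e q.1) ⁻¹' S₁ ∈ 𝒰 := by
      refine mem_of_superset (memT 0 univ univ_mem) ?_
      rintro q ⟨n, _, h1, _, _⟩
      show e q.1 ∈ S₁
      rw [h1]
      exact ⟨(gsel n : G) * p₀⁻¹, ⟨(gsel n : G), (gsel n).2, rfl⟩, rfl⟩
    obtain ⟨b₁, hb₁S, hb₁le⟩ := hS₁c.ultrafilter_le_nhds
      (Ultrafilter.map (fun q : G × G => e q.1) 𝒰)
      (le_principal_iff.2 (Ultrafilter.mem_map.2 hS₁mem))
    obtain ⟨c₁, _, hc₁e⟩ := hb₁S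
    have htend₁ : Tendsto (fun q : G × G => q.1) (𝒰 : Filter (G × G)) (𝓝 c₁) := by
      rw [he.toIsInducing.nhds_eq_comap c₁, tendsto_comap_iff]
      rw [hc₁e]
      exact hb₁le
    -- second coordinate converges to a point of `range e`
    have hS₂mem : ∀ m, (fun q : G × G => e q.2) ⁻¹' (Sq m) ∈ 𝒰 := by
      intro m
      refine mem_of_superset (memT m univ univ_mem) ?_
      rintro q ⟨n, hn, _, h2, _⟩
      exact hSqanti m n hn h2
    have hS₂c : IsCompact (closure (Sq 0)) := isClosed_closure.isCompact
    have hS₂mem0 : (fun q : G × G => e q.2) ⁻¹' (closure (Sq 0)) ∈ 𝒰 :=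
      mem_of_superset (hS₂mem 0) (fun q hq => subset_closure hq)
    obtain ⟨b₂, hb₂S, hb₂le⟩ := hS₂c.ultrafilter_le_nhds
      (Ultrafilter.map (fun q : G × G => e q.2) 𝒰)
      (le_principal_iff.2 (Ultrafilter.mem_map.2 hS₂mem0))
    have hb₂cl : ∀ m, b₂ ∈ closure (Sq m) := by
      intro m
      rw [mem_closure_iff_nhds]
      intro N hN
      have hmem : N ∩ Sq m ∈ (Ultrafilter.map (fun q : G × G => e q.2) 𝒰 : Filter B) :=
        inter_mem (hb₂le hN) (Ultrafilter.mem_map.2 (hS₂mem m))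
      exact Filter.nonempty_of_mem hmem
    have hb₂range : b₂ ∈ Set.range e := by
      apply hres
      constructor
      · exact (hSqP 0).2.2.1 (hb₂cl 0)
      · exact mem_iInter.2 fun m => (hSqP m).2.2.2 (hb₂cl m)
    obtain ⟨c₂, hc₂e⟩ := hb₂range
    have htend₂ : Tendsto (fun q : G × G => q.2) (𝒰 : Filter (G × G)) (𝓝 c₂) := by
      rw [he.toIsInducing.nhds_eq_comap c₂, tendsto_comap_iff]
      rw [hc₂e]
      exact hb₂le
    -- multiply and compare limits
    have hmul : Tendsto (fun q : G × G => q.1 * q.2) (𝒰 : Filter (G × G)) (𝓝 (c₁ * c₂)) :=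
      htend₁.mul htend₂
    have hemul : Tendsto (fun q : G × G => e (q.1 * q.2)) (𝒰 : Filter (G × G))
        (𝓝 (e (c₁ * c₂))) := (he.continuous.tendsto _).comp hmul
    have hetoy : Tendsto (fun q : G × G => e (q.1 * q.2)) (𝒰 : Filter (G × G)) (𝓝 y) := by
      intro N hN
      rw [Filter.mem_map]
      refine mem_of_superset (memT 0 N hN) ?_
      rintro q ⟨n, _, _, _, h3⟩
      exact h3
    have : y = e (c₁ * c₂) := tendsto_nhds_unique hetoy hemul
    exact hyr ⟨c₁ * c₂, this.symm⟩
  -- conclude Lindelöf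
  apply isLindelof_of_countable_subcover
  intro ι Usets hUo hcover
  set CC : Set B := (⋃ i, Usets i)ᶜ with hCC
  have hCCc : IsCompact CC := (isOpen_iUnion hUo).isClosed_compl.isCompact
  have hCCr : CC ⊆ Set.range e := by
    intro x hx
    by_contra hxr
    exact hx (hcover hxr)
  obtain ⟨U, hUo', hUsup, hUsub⟩ := main CC hCCc hCCr
  have hK : ∀ n, ∃ t : Finset ι, ((U n)ᶜ : Set B) ⊆ ⋃ i ∈ t, Usets i := by
    intro n
    apply ((hUo' n).isClosed_compl.isCompact).elim_finite_subcover Usets hUo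
    intro x hx
    by_contra hxn
    exact hx (hUsup n (by rwa [hCC, mem_compl_iff]))
  choose tK htK using hK
  refine ⟨⋃ n, ((tK n : Finset ι) : Set ι), countable_iUnion (fun n => (tK n).countable_toSet), ?_⟩
  intro y hy
  have : ∃ n, y ∉ U n := by
    by_contra h
    push_neg at h
    exact hy (hUsub (mem_iInter.2 h))
  obtain ⟨n, hn⟩ := this
  have := htK n hn
  rw [mem_iUnion₂] at this
  obtain ⟨i, hi, hyi⟩ := this
  exact mem_iUnion₂.2 ⟨i, mem_iUnion.2 ⟨n, hi⟩, hyi⟩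

end Machine

section Stone

variable {G : Type*} [TopologicalSpace G]

/-- `stoneCechUnit` is an embedding for T3.5 spaces. -/
lemma isEmbedding_stoneCechUnit_t35 [T35Space G] :
    Topology.IsEmbedding (stoneCechUnit : G → StoneCech G) := by
  apply Topology.IsEmbedding.mk' _ injective_stoneCechUnit_of_t35Space
  intro x
  refine le_antisymm ?_ (Filter.map_le_iff_le_comap.1 (continuous_stoneCechUnit.tendsto x))
  intro U hU
  obtain ⟨O, hOU, hOo, hxO⟩ := mem_nhds_iff.1 hU
  obtain ⟨f, hfc, hfx, hfK⟩ := CompletelyRegularSpace.completely_regular x Oᶜ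
    hOo.isClosed_compl (by simpa using hxO)
  have hFu : stoneCechExtend hfc ∘ stoneCechUnit = f := stoneCechExtend_extends hfc
  refine mem_comap.2 ⟨stoneCechExtend hfc ⁻¹' ({1}ᶜ), ?_, ?_⟩
  · apply IsOpen.mem_nhds
    · exact isClosed_singleton.isOpen_compl.preimage (continuous_stoneCechExtend hfc)
    · show stoneCechExtend hfc (stoneCechUnit x) ∈ ({1}ᶜ : Set unitInterval)
      have h1 : stoneCechExtend hfc (stoneCechUnit x) = f x := congrFun hFu x
      rw [h1, hfx]
      simp only [mem_compl_iff, mem_singleton_iff]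
      intro h01
      have := congrArg Subtype.val h01
      norm_num at this
  · intro z hz
    apply hOU
    by_contra hzO
    have h1 : f z = 1 := hfK hzO
    have h2 : stoneCechExtend hfc (stoneCechUnit z) = f z := congrFun hFu z
    simp only [mem_preimage, mem_compl_iff, mem_singleton_iff] at hz
    exact hz (by rw [h2, h1])

variable {B : Type*} [TopologicalSpace B] [CompactSpace B] [T2Space B]

/-- The canonical map from the Stone-Čech compactification onto any compactification
is surjective. -/
lemma stone_pi_surjective {e : G → B} (hec : Continuous e) (hd : DenseRange e) :
    Function.Surjective (stoneCechExtend hec) := by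
  have h1 : IsCompact (Set.range (stoneCechExtend hec)) :=
    isCompact_range (continuous_stoneCechExtend hec)
  have h2 : IsClosed (Set.range (stoneCechExtend hec)) := h1.isClosed
  have h3 : Set.range e ⊆ Set.range (stoneCechExtend hec) := by
    rintro _ ⟨x, rfl⟩
    exact ⟨stoneCechUnit x, congrFun (stoneCechExtend_extends hec) x⟩
  intro b
  have : b ∈ closure (Set.range e) := hd b
  have := (closure_mono h3) this
  rwa [h2.closure_eq] at this

/-- Fibers over points of `G` are singletons. -/
lemma stone_pi_fiber [T35Space G] {e : G → B} (he : Topology.IsEmbedding e)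
    {z : StoneCech G} {x₀ : G} (h : stoneCechExtend he.continuous z = e x₀) :
    z = stoneCechUnit x₀ := by
  by_contra hne
  obtain ⟨Oz, O', hOzo, hO'o, hzOz, hxO', hdisj⟩ := t2_separation hne
  set A : Set G := stoneCechUnit ⁻¹' Oz with hA
  have hud : Dense (Set.range (stoneCechUnit : G → StoneCech G)) := denseRange_stoneCechUnit
  have h1 : z ∈ closure (stoneCechUnit '' A) := by
    have := open_subset_closure_inter hud hOzo hzOz
    rwa [hA, Set.image_preimage_eq_inter_range]
  have h2 : e x₀ ∈ closure (e '' A) := by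
    have h2a : stoneCechExtend he.continuous z ∈
        closure (stoneCechExtend he.continuous '' (stoneCechUnit '' A)) :=
      image_closure_subset_closure_image (continuous_stoneCechExtend he.continuous)
        (mem_image_of_mem _ h1)
    rw [h] at h2a
    have h2b : stoneCechExtend he.continuous '' (stoneCechUnit '' A) = e '' A := by
      rw [← Set.image_comp, stoneCechExtend_extends he.continuous]
    rwa [h2b] at h2a
  have h3 : x₀ ∈ closure A := by
    rw [he.toIsInducing.closure_eq_preimage_closure_image A]
    exact h2
  have h4 : stoneCechUnit x₀ ∈ closure (stoneCechUnit '' A) :=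
    image_closure_subset_closure_image continuous_stoneCechUnit (mem_image_of_mem _ h3)
  rw [mem_closure_iff] at h4
  obtain ⟨w, hw1, hw2⟩ := h4 O' hO'o hxO'
  obtain ⟨v, hv, rfl⟩ := hw2
  exact Set.disjoint_left.1 hdisj hv hw1

lemma stone_pi_preimage_range [T35Space G] {e : G → B} (he : Topology.IsEmbedding e) :
    stoneCechExtend he.continuous ⁻¹' (Set.range e) =
      Set.range (stoneCechUnit : G → StoneCech G) := by
  ext z
  constructor
  · rintro ⟨x₀, hx₀⟩
    exact ⟨x₀, (stone_pi_fiber he hx₀.symm).symm⟩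
  · rintro ⟨x, rfl⟩
    exact ⟨x, (congrFun (stoneCechExtend_extends he.continuous) x).symm⟩

/-- Irreducibility of the canonical map. -/
lemma stone_pi_irreducible [T35Space G] {e : G → B} (he : Topology.IsEmbedding e)
    (hd : DenseRange e) {F : Set (StoneCech G)} (hFc : IsClosed F)
    (hFs : stoneCechExtend he.continuous '' F = univ) : F = univ := by
  have h1 : Set.range (stoneCechUnit : G → StoneCech G) ⊆ F := by
    rintro _ ⟨x, rfl⟩
    have : e x ∈ stoneCechExtend he.continuous '' F := hFs ▸ mem_univ _
    obtain ⟨z, hzF, hz⟩ := this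
    rwa [stone_pi_fiber he hz] at hzF
  have := closure_mono h1
  rw [hFc.closure_eq, (denseRange_stoneCechUnit).closure_range] at this
  exact le_antisymm (subset_univ F) this

/-- Preimages of dense open sets under the canonical map are dense. -/
lemma stone_pi_dense_preimage [T35Space G] {e : G → B} (he : Topology.IsEmbedding e)
    (hd : DenseRange e) {D : Set B} (hDd : Dense D) :
    Dense (stoneCechExtend he.continuous ⁻¹' D) := by
  rw [dense_iff_inter_open]
  intro Vt hVto hVtne
  by_contra hempty
  rw [not_nonempty_iff_eq_empty] at hempty
  have hsub : stoneCechExtend he.continuous ⁻¹' D ⊆ Vtᶜ := by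
    intro z hz
    intro hzV
    exact absurd (show z ∈ Vt ∩ _ from ⟨hzV, hz⟩) (by rw [hempty]; exact notMem_empty z)
  have himg : stoneCechExtend he.continuous '' (Vtᶜ) = univ := by
    apply le_antisymm (subset_univ _)
    have hclosed : IsClosed (stoneCechExtend he.continuous '' (Vtᶜ)) :=
      (Continuous.isClosedMap (continuous_stoneCechExtend he.continuous)) _ hVto.isClosed_compl
    have hDsub : D ⊆ stoneCechExtend he.continuous '' (Vtᶜ) := by
      intro b hb
      obtain ⟨z, rfl⟩ := stone_pi_surjective he.continuous hd b
      exact ⟨z, hsub hb, rfl⟩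
    calc univ = closure D := hDd.closure_eq.symm
      _ ⊆ closure (stoneCechExtend he.continuous '' (Vtᶜ)) := closure_mono hDsub
      _ = _ := hclosed.closure_eq
  have hcompl := stone_pi_irreducible he hd hVto.isClosed_compl himg
  obtain ⟨z, hz⟩ := hVtne
  have : z ∈ Vtᶜ := hcompl ▸ mem_univ z
  exact this hz

end Stone

section Hash

variable {G : Type*} [TopologicalSpace G] [T35Space G] {B : Type*}
  [TopologicalSpace B] [CompactSpace B] [T2Space B]

/-- The "small image" of a dense open set under the canonical map is dense. -/
lemma stone_pi_hash_dense {e : G → B} (he : Topology.IsEmbedding e) (hd : DenseRange e)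
    {T : Set (StoneCech G)} (hTo : IsOpen T) (hTd : Dense T) :
    Dense ((stoneCechExtend he.continuous '' Tᶜ)ᶜ) := by
  rw [dense_iff_inter_open]
  intro O hOo hOne
  by_contra hempty
  rw [not_nonempty_iff_eq_empty] at hempty
  have hsub : O ⊆ stoneCechExtend he.continuous '' Tᶜ := by
    intro b hb
    by_contra hbn
    exact absurd (show b ∈ O ∩ _ from ⟨hb, hbn⟩) (by rw [hempty]; exact notMem_empty b)
  have hpre_ne : (stoneCechExtend he.continuous ⁻¹' O).Nonempty := by
    obtain ⟨b, hb⟩ := hOne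
    obtain ⟨z, rfl⟩ := stone_pi_surjective he.continuous hd b
    exact ⟨z, hb⟩
  have hF : Tᶜ ∪ (stoneCechExtend he.continuous ⁻¹' O)ᶜ = univ := by
    apply stone_pi_irreducible he hd
    · exact hTo.isClosed_compl.union (hOo.preimage (continuous_stoneCechExtend he.continuous)).isClosed_compl
    · apply le_antisymm (subset_univ _)
      intro b _
      by_cases hb : b ∈ O
      · obtain ⟨z, hz, hze⟩ := hsub hb
        exact ⟨z, Or.inl hz, hze⟩
      · obtain ⟨z, rfl⟩ := stone_pi_surjective he.continuous hd b
        exact ⟨z, Or.inr (fun h => hb h), rfl⟩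
  obtain ⟨w, hw1, hw2⟩ := hTd.inter_open_nonempty _
    (hOo.preimage (continuous_stoneCechExtend he.continuous)) hpre_ne
  have : w ∈ Tᶜ ∪ (stoneCechExtend he.continuous ⁻¹' O)ᶜ := hF ▸ mem_univ w
  rcases this with h | h
  · exact h hw2
  · exact h hw1

end Hash

section Lam

variable {G : Type*} [TopologicalSpace G] [Group G] [ContinuousMul G]

noncomputable def stoneLam (a : G) : StoneCech G → StoneCech G :=
  stoneCechExtend (continuous_stoneCechUnit.comp (continuous_mul_left a))

lemma stoneLam_unit (a x : G) : stoneLam a (stoneCechUnit x) = stoneCechUnit (a * x) :=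
  congrFun (stoneCechExtend_extends _) x

lemma stoneLam_continuous (a : G) : Continuous (stoneLam a) :=
  continuous_stoneCechExtend _

lemma stoneLam_comp (a : G) : (stoneLam a⁻¹) ∘ (stoneLam a) = id := by
  apply stoneCech_hom_ext ((stoneLam_continuous a⁻¹).comp (stoneLam_continuous a)) continuous_id
  funext x
  simp only [Function.comp_apply, stoneLam_unit, inv_mul_cancel_left, id_eq]

noncomputable def stoneLamHomeo (a : G) : StoneCech G ≃ₜ StoneCech G where
  toFun := stoneLam a
  invFun := stoneLam a⁻¹
  left_inv := fun z => congrFun (stoneLam_comp a) z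
  right_inv := fun z => by
    have h := stoneLam_comp a⁻¹
    rw [inv_inv] at h
    exact congrFun h z
  continuous_toFun := stoneLam_continuous a
  continuous_invFun := stoneLam_continuous a⁻¹

lemma stoneLamHomeo_apply (a : G) (z : StoneCech G) : stoneLamHomeo a z = stoneLam a z := rfl

end Lam

lemma dense_homeo_image {X Y : Type*} [TopologicalSpace X] [TopologicalSpace Y]
    (h : X ≃ₜ Y) {s : Set X} (hs : Dense s) : Dense (h '' s) := by
  rw [dense_iff_closure_eq, ← h.image_closure, hs.closure_eq, image_univ, h.surjective.range_eq]

/-- If `G` is a non-locally compact paratopological group and `bG` (here `B`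
with embedding `e`) is a Hausdorff compactification of `G` such that the remainder
`Y = bG \ G` does not have the Baire property, then `Y` is Lindelöf and meager. -/
theorem stmt0 {G B : Type*} [TopologicalSpace G] [T35Space G] [Group G] [ContinuousMul G]
    [TopologicalSpace B] [CompactSpace B] [T2Space B]
    (hnlc : ¬ LocallyCompactSpace G)
    (e : G → B) (he : Topology.IsEmbedding e) (hd : DenseRange e)
    (hY : ¬ BaireSpace ((Set.range e)ᶜ : Set B)) :
    LindelofSpace ((Set.range e)ᶜ : Set B) ∧
      IsMeagre (Set.univ : Set ((Set.range e)ᶜ : Set B)) := by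
  classical
  -- Step 1: the remainder is dense, since `G` is nowhere locally compact
  have hYd : Dense ((Set.range e)ᶜ : Set B) := by
    by_contra hnd
    rw [dense_iff_inter_open] at hnd
    push_neg at hnd
    obtain ⟨O, hOo, hOne, hOY⟩ := hnd
    have hOsub : O ⊆ Set.range e := by
      intro x hx
      by_contra hxr
      exact absurd (show x ∈ O ∩ (Set.range e)ᶜ from ⟨hx, hxr⟩)
        (by rw [hOY]; exact notMem_empty x)
    obtain ⟨x, hx⟩ := hOne
    obtain ⟨g₀, hg₀⟩ := hOsub hx
    obtain ⟨K, hKc, hKi, hKO⟩ := exists_compact_subset hOo hx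
    have hKrange : K ⊆ Set.range e := hKO.trans hOsub
    have hpre : IsCompact (e ⁻¹' K) := he.isCompact_iff.2
      (by rw [Set.image_preimage_eq_of_subset hKrange]; exact hKc)
    have hnb : e ⁻¹' K ∈ 𝓝 g₀ := by
      rw [he.toIsInducing.nhds_eq_comap]
      apply preimage_mem_comap
      rw [hg₀]
      exact mem_of_superset (isOpen_interior.mem_nhds hKi) interior_subset
    haveI : WeaklyLocallyCompactSpace G := by
      refine ⟨fun x' => ?_⟩
      refine ⟨(Homeomorph.mulLeft (x' * g₀⁻¹)) '' (e ⁻¹' K),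
        hpre.image (Homeomorph.mulLeft (x' * g₀⁻¹)).continuous, ?_⟩
      have h1 : (Homeomorph.mulLeft (x' * g₀⁻¹)) '' (e ⁻¹' K) ∈
          Filter.map (Homeomorph.mulLeft (x' * g₀⁻¹)) (𝓝 g₀) := image_mem_map hnb
      rw [(Homeomorph.mulLeft (x' * g₀⁻¹)).map_nhds_eq] at h1
      have h2 : (Homeomorph.mulLeft (x' * g₀⁻¹)) g₀ = x' := by
        show x' * g₀⁻¹ * g₀ = x'
        exact inv_mul_cancel_right x' g₀
      rwa [h2] at h1
    exact hnlc inferInstance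
  -- Step 2: extract a witness from the failure of the Baire property
  obtain ⟨W₀, hW₀o, hW₀ne, E', hE'o, hE'd, hE'res⟩ :
      ∃ W₀ : Set B, IsOpen W₀ ∧ W₀.Nonempty ∧ ∃ E' : ℕ → Set B,
        (∀ n, IsOpen (E' n)) ∧ (∀ n, Dense (E' n)) ∧ (W₀ ∩ ⋂ n, E' n) ⊆ Set.range e := by
    have h' : ¬ ∀ f : ℕ → Set ((Set.range e)ᶜ : Set B),
        (∀ n, IsOpen (f n)) → (∀ n, Dense (f n)) → Dense (⋂ n, f n) := fun hall => hY ⟨hall⟩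
    push_neg at h'
    obtain ⟨f, hfo, hfd, hfnd⟩ := h'
    have hE'ex : ∀ n, ∃ t : Set B, IsOpen t ∧ Subtype.val ⁻¹' t = f n := by
      intro n
      exact isOpen_induced_iff.1 (hfo n)
    choose E' hE'o hE'pre using hE'ex
    rw [dense_iff_inter_open] at hfnd
    push_neg at hfnd
    obtain ⟨V, hVo, hVne, hVdisj⟩ := hfnd
    obtain ⟨W₀, hW₀o, hW₀pre⟩ := isOpen_induced_iff.1 hVo
    obtain ⟨⟨v, hvY⟩, hvV⟩ := hVne
    refine ⟨W₀, hW₀o, ⟨v, by rw [← hW₀pre] at hvV; exact hvV⟩, E', hE'o, ?_, ?_⟩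
    · -- density downstairs
      intro n
      rw [dense_iff_inter_open]
      intro O hOo hOne
      have hOY : ((Subtype.val ⁻¹' O : Set ((Set.range e)ᶜ : Set B))).Nonempty := by
        obtain ⟨y, hy1, hy2⟩ := hYd.inter_open_nonempty O hOo hOne
        exact ⟨⟨y, hy2⟩, hy1⟩
      have : ((Subtype.val ⁻¹' O : Set ((Set.range e)ᶜ : Set B)) ∩ f n).Nonempty :=
        (hfd n).inter_open_nonempty _ (hOo.preimage continuous_subtype_val) hOY
      obtain ⟨z, hz1, hz2⟩ := this
      rw [← hE'pre n] at hz2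
      exact ⟨z.1, hz1, hz2⟩
    · -- residual inclusion
      intro b hb
      by_contra hbr
      have hbY : b ∈ ((Set.range e)ᶜ : Set B) := hbr
      have h1 : (⟨b, hbY⟩ : ((Set.range e)ᶜ : Set B)) ∈ V := by
        rw [← hW₀pre]; exact hb.1
      have h2 : (⟨b, hbY⟩ : ((Set.range e)ᶜ : Set B)) ∈ ⋂ n, f n := by
        rw [mem_iInter]
        intro n
        rw [← hE'pre n]
        exact (mem_iInter.1 hb.2) n
      exact absurd (show _ ∈ V ∩ ⋂ n, f n from ⟨h1, h2⟩)
        (by rw [hVdisj]; exact notMem_empty _)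
  -- Step 3: Stone-Čech setup
  have heu : Topology.IsEmbedding (stoneCechUnit : G → StoneCech G) :=
    isEmbedding_stoneCechUnit_t35
  have hdu : DenseRange (stoneCechUnit : G → StoneCech G) := denseRange_stoneCechUnit
  have hπc : Continuous (stoneCechExtend he.continuous) :=
    continuous_stoneCechExtend he.continuous
  have hπs : Function.Surjective (stoneCechExtend he.continuous) :=
    stone_pi_surjective he.continuous hd
  have hπr : stoneCechExtend he.continuous ⁻¹' (Set.range e) =
      Set.range (stoneCechUnit : G → StoneCech G) := stone_pi_preimage_range he
  have hπu : ∀ x : G, stoneCechExtend he.continuous (stoneCechUnit x) = e x :=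
    fun x => congrFun (stoneCechExtend_extends he.continuous) x
  -- upstairs witness
  have hWt_ne : (stoneCechExtend he.continuous ⁻¹' W₀).Nonempty := by
    obtain ⟨b, hb⟩ := hW₀ne
    obtain ⟨z, rfl⟩ := hπs b
    exact ⟨z, hb⟩
  have hres_up : (stoneCechExtend he.continuous ⁻¹' W₀ ∩
      ⋂ n, stoneCechExtend he.continuous ⁻¹' (E' n)) ⊆
      Set.range (stoneCechUnit : G → StoneCech G) := by
    intro z hz
    rw [← hπr]
    apply hE'res
    exact ⟨hz.1, mem_iInter.2 fun n => (mem_iInter.1 hz.2) n⟩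
  -- Step 4: Lindelöf
  have hLinUp : IsLindelof ((Set.range (stoneCechUnit : G → StoneCech G))ᶜ) :=
    isLindelof_compl_range_of_witness stoneCechUnit heu hdu
      (stoneCechExtend he.continuous ⁻¹' W₀) (hW₀o.preimage hπc) hWt_ne
      (fun n => stoneCechExtend he.continuous ⁻¹' (E' n))
      (fun n => (hE'o n).preimage hπc)
      (fun n => stone_pi_dense_preimage he hd (hE'd n))
      hres_up
  have himg : stoneCechExtend he.continuous '' ((Set.range (stoneCechUnit : G → StoneCech G))ᶜ)
      = ((Set.range e)ᶜ : Set B) := by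
    apply le_antisymm
    · rintro _ ⟨z, hz, rfl⟩
      intro hze
      exact hz (by rw [← hπr]; exact hze)
    · intro y hy
      obtain ⟨z, rfl⟩ := hπs y
      refine ⟨z, ?_, rfl⟩
      rintro ⟨x, rfl⟩
      exact hy ⟨x, (hπu x).symm⟩
  have hLin : LindelofSpace ((Set.range e)ᶜ : Set B) := by
    rw [← isLindelof_iff_LindelofSpace]
    rw [← himg]
    exact hLinUp.image hπc
  refine ⟨hLin, ?_⟩
  -- Step 5: meagre
  apply meagre_of_witnesses ((Set.range e)ᶜ : Set B) hYd
  intro O hOo hOne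
  -- move the witness into O via a translation upstairs
  have hOtne : (stoneCechExtend he.continuous ⁻¹' O).Nonempty := by
    obtain ⟨b, hb⟩ := hOne
    obtain ⟨z, rfl⟩ := hπs b
    exact ⟨z, hb⟩
  obtain ⟨zq, hzqW, q₀, hq₀⟩ :
      ∃ z, z ∈ stoneCechExtend he.continuous ⁻¹' W₀ ∧ ∃ x : G, stoneCechUnit x = z := by
    obtain ⟨z, hz1, hz2⟩ := (hdu : Dense (Set.range (stoneCechUnit : G → StoneCech G))).inter_open_nonempty
      _ (hW₀o.preimage hπc) hWt_ne
    exact ⟨z, hz1, hz2⟩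
  obtain ⟨za, hzaO, a₀, ha₀⟩ :
      ∃ z, z ∈ stoneCechExtend he.continuous ⁻¹' O ∧ ∃ x : G, stoneCechUnit x = z := by
    obtain ⟨z, hz1, hz2⟩ := (hdu : Dense (Set.range (stoneCechUnit : G → StoneCech G))).inter_open_nonempty
      _ (hOo.preimage hπc) hOtne
    exact ⟨z, hz1, hz2⟩
  set a : G := a₀ * q₀⁻¹ with ha
  set κ : StoneCech G ≃ₜ StoneCech G := stoneLamHomeo a with hκ
  set Wt : Set (StoneCech G) :=
    (κ '' (stoneCechExtend he.continuous ⁻¹' W₀)) ∩ (stoneCechExtend he.continuous ⁻¹' O)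
    with hWt
  have hWto : IsOpen Wt := (κ.isOpenMap _ (hW₀o.preimage hπc)).inter (hOo.preimage hπc)
  have hWtne : Wt.Nonempty := by
    refine ⟨stoneCechUnit a₀, ⟨zq, hzqW, ?_⟩, ?_⟩
    · rw [← hq₀]
      show stoneLam a (stoneCechUnit q₀) = stoneCechUnit a₀
      rw [stoneLam_unit]
      congr 1
      exact inv_mul_cancel_right a₀ q₀
    · rw [ha₀]
      exact hzaO
  set Et : ℕ → Set (StoneCech G) :=
    fun n => κ '' (stoneCechExtend he.continuous ⁻¹' (E' n)) with hEt
  have hEto : ∀ n, IsOpen (Et n) := fun n => κ.isOpenMap _ ((hE'o n).preimage hπc)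
  have hEtd : ∀ n, Dense (Et n) := fun n =>
    dense_homeo_image κ (stone_pi_dense_preimage he hd (hE'd n))
  -- push down
  refine ⟨(stoneCechExtend he.continuous '' Wtᶜ)ᶜ, ?_, ?_, ?_,
    fun n => (stoneCechExtend he.continuous '' (Et n)ᶜ)ᶜ, ?_, ?_, ?_⟩
  · -- ⊆ O
    intro b hb
    obtain ⟨z, rfl⟩ := hπs b
    by_cases hz : z ∈ Wt
    · exact hz.2
    · exact absurd ⟨z, hz, rfl⟩ hb
  · -- open
    exact ((Continuous.isClosedMap hπc) _ hWto.isClosed_compl).isOpen_compl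
  · -- nonempty
    by_contra hemp
    rw [not_nonempty_iff_eq_empty, compl_empty_iff] at hemp
    have := stone_pi_irreducible he hd hWto.isClosed_compl hemp
    obtain ⟨z, hz⟩ := hWtne
    have hz' : z ∈ Wtᶜ := this ▸ mem_univ z
    exact hz' hz
  · -- opens
    exact fun n => ((Continuous.isClosedMap hπc) _ (hEto n).isClosed_compl).isOpen_compl
  · -- dense
    exact fun n => stone_pi_hash_dense he hd (hEto n) (hEtd n)
  · -- residual
    intro b hb
    rw [compl_compl]
    obtain ⟨z, rfl⟩ := hπs b
    have hzW : z ∈ Wt := by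
      by_contra hz
      exact absurd ⟨z, hz, rfl⟩ hb.1
    have hzE : ∀ n, z ∈ Et n := by
      intro n
      by_contra hz
      exact absurd ⟨z, hz, rfl⟩ ((mem_iInter.1 hb.2) n)
    obtain ⟨w, hwW, hwz⟩ := hzW.1
    have hwE : ∀ n, w ∈ stoneCechExtend he.continuous ⁻¹' (E' n) := by
      intro n
      obtain ⟨w', hw', hw'z⟩ := hzE n
      have : w' = w := κ.injective (by rw [hwz, hw'z])
      rwa [← this]
    have hwres : w ∈ Set.range (stoneCechUnit : G → StoneCech G) :=
      hres_up ⟨hwW, mem_iInter.2 hwE⟩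
    obtain ⟨x, rfl⟩ := hwres
    have : z = stoneCechUnit (a * x) := by
      rw [← hwz]
      exact (stoneLam_unit a x)
    rw [this, hπu]
    exact ⟨a * x, rfl⟩
end

section
/- If G is a paratopological group containing a non-empty compact subset of countable character in G, then G is of countable type. -/
open Set

/-- A set `A` has countable character in `X`: there is a countable family of open sets
containing `A` whose intersection is `A` and such that every open neighborhood of `A`
contains a member of the family. -/
def HasCountableChar {X : Type*} [TopologicalSpace X] (A : Set X) : Prop :=
  ∃ U : ℕ → Set X, (∀ n, IsOpen (U n) ∧ A ⊆ U n) ∧ A = ⋂ n, U n ∧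
    ∀ V : Set X, IsOpen V → A ⊆ V → ∃ n, U n ⊆ V

/-- A space is of countable type if every compact subset is contained in a compact
subset having countable character. -/
def CountableType (X : Type*) [TopologicalSpace X] : Prop :=
  ∀ K : Set X, IsCompact K → ∃ K' : Set X, IsCompact K' ∧ K ⊆ K' ∧ HasCountableChar K'

open Pointwise in
/-- Key lemma: if `V n` is an antitone neighborhood basis (in the character sense) of a
compact set `K`, `F` is compact, and `W` is an open set containing `F * K`, then some
`F * V n` is contained in `W`. -/
lemma keyB {G : Type*} [TopologicalSpace G] [Group G] [ContinuousMul G]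
    {K : Set G} (hK : IsCompact K) (V : ℕ → Set G)
    (hVK : ∀ n, K ⊆ V n) (hanti : Antitone V)
    (hchar : ∀ W : Set G, IsOpen W → K ⊆ W → ∃ n, V n ⊆ W)
    {F : Set G} (hF : IsCompact F)
    {W : Set G} (hW : IsOpen W) (hFKW : F * K ⊆ W) :
    ∃ n, F * V n ⊆ W := by
  -- for each c ∈ F, find an open A ∋ c and n with A * V n ⊆ W
  have step : ∀ c ∈ F, ∃ A : Set G, ∃ n : ℕ,
      IsOpen A ∧ c ∈ A ∧ ∀ a ∈ A, ∀ v ∈ V n, a * v ∈ W := by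
    intro c hc
    have hsub : ({c} : Set G) ×ˢ K ⊆ (fun p : G × G => p.1 * p.2) ⁻¹' W := by
      rintro ⟨a, b⟩ ⟨ha, hb⟩
      simp only [mem_singleton_iff] at ha
      exact hFKW (Set.mul_mem_mul (ha ▸ hc) hb)
    obtain ⟨u, v, hu, hv, hcu, hKv, huv⟩ :=
      generalized_tube_lemma isCompact_singleton hK (hW.preimage continuous_mul) hsub
    obtain ⟨n, hn⟩ := hchar v hv hKv
    exact ⟨u, n, hu, hcu rfl, fun a ha w hw => huv (Set.mk_mem_prod ha (hn hw))⟩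
  choose! A n hAopen hcA hAW using step
  obtain ⟨t, ht⟩ := hF.elim_finite_subcover (fun c : F => A c)
    (fun c : F => hAopen c c.2) (fun x hx => mem_iUnion.2 ⟨⟨x, hx⟩, hcA x hx⟩)
  refine ⟨t.sup (fun c : F => n c), ?_⟩
  rintro x ⟨f, hf, v, hv, rfl⟩
  obtain ⟨c, hct, hfA⟩ := mem_iUnion₂.1 (ht hf)
  exact hAW c c.2 f hfA v (hanti (Finset.le_sup (f := fun c : F => n c) hct) hv)

open Pointwise in
/-- a paratopological group containing a nonempty compact set of countable
character is of countable type. -/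
theorem stmt1 {G : Type*} [TopologicalSpace G] [T35Space G] [Group G] [ContinuousMul G]
    (K : Set G) (hne : K.Nonempty) (hK : IsCompact K) (hχ : HasCountableChar K) :
    CountableType G := by
  obtain ⟨U, hU, hUinter, hUchar⟩ := hχ
  -- make the family antitone
  set V : ℕ → Set G := fun n => ⋂ i ∈ Finset.range (n + 1), U i with hV
  have hVopen : ∀ n, IsOpen (V n) := fun n =>
    isOpen_biInter_finset (fun i _ => (hU i).1)
  have hVK : ∀ n, K ⊆ V n := fun n =>
    subset_iInter₂ fun i _ => (hU i).2
  have hVU : ∀ n, V n ⊆ U n := fun n =>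
    iInter₂_subset n (Finset.self_mem_range_succ n)
  have hanti : Antitone V := by
    intro m k hmk
    exact fun x hx => mem_iInter₂.2 fun i hi =>
      mem_iInter₂.1 hx i (Finset.mem_range.2 ((Finset.mem_range.1 hi).trans_le (by omega)))
  have hchar : ∀ W : Set G, IsOpen W → K ⊆ W → ∃ n, V n ⊆ W := by
    intro W hWo hKW
    obtain ⟨n, hn⟩ := hUchar W hWo hKW
    exact ⟨n, (hVU n).trans hn⟩
  intro C hC
  obtain ⟨k₀, hk₀⟩ := hne
  set F : Set G := (fun g => g * k₀⁻¹) '' C with hF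
  have hFcomp : IsCompact F := hC.image (continuous_mul_right k₀⁻¹)
  refine ⟨F * K, hFcomp.mul hK, ?_, ?_⟩
  · intro c hc
    have : c = (c * k₀⁻¹) * k₀ := by group
    rw [this]
    exact Set.mul_mem_mul ⟨c, hc, rfl⟩ hk₀
  · refine ⟨fun nn => F * V nn, fun nn => ⟨(hVopen nn).mul_left,
      Set.mul_subset_mul_left (hVK nn)⟩, ?_, fun W hWo hsub =>
      keyB hK V hVK hanti hchar hFcomp hWo hsub⟩
    apply Subset.antisymm (subset_iInter fun nn => Set.mul_subset_mul_left (hVK nn))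
    intro x hx
    by_contra hx'
    obtain ⟨nn, hnn⟩ := keyB hK V hVK hanti hchar hFcomp (W := {x}ᶜ)
      isOpen_compl_singleton (fun y hy => fun (h : y = x) => hx' (h ▸ hy))
    exact hnn (mem_iInter.1 hx nn) rfl
end

section
/- A remainder of a non-locally compact paratopological group cannot simultaneously have the Baire property and be meager: equivalently, a non-empty space failing the Baire property has a non-empty open meager subset, and conversely a space with a non-empty open meager subset fails the Baire property. -/
open Set

/-- Auxiliary: general form of the second conjunct. -/
lemma not_baire_iff_aux {X : Type*} [TopologicalSpace X] [Nonempty X] :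
    (¬ BaireSpace X) ↔ ∃ U : Set X, IsOpen U ∧ U.Nonempty ∧ IsMeagre U := by
  constructor
  · intro h
    have : ¬ ∀ f : ℕ → Set X, (∀ n, IsOpen (f n)) → (∀ n, Dense (f n)) →
        Dense (⋂ n, f n) := fun hf => h ⟨hf⟩
    push_neg at this
    obtain ⟨f, ho, hdn, hnd⟩ := this
    rw [dense_iff_inter_open] at hnd
    push_neg at hnd
    obtain ⟨U, hU, hUne, hUint⟩ := hnd
    refine ⟨U, hU, hUne, ?_⟩
    rw [isMeagre_iff_countable_union_isNowhereDense]
    refine ⟨range (fun n => (f n)ᶜ), ?_, countable_range _, ?_⟩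
    · rintro t ⟨n, rfl⟩
      show interior (closure (f n)ᶜ) = ∅
      rw [(ho n).isClosed_compl.closure_eq, interior_compl, (hdn n).closure_eq,
        compl_univ]
    · intro x hx
      rw [sUnion_range]
      by_contra hc
      simp only [mem_iUnion, mem_compl_iff, not_exists, not_not] at hc
      exact (not_nonempty_iff_eq_empty.mpr hUint) ⟨x, hx, mem_iInter.mpr hc⟩
  · rintro ⟨U, hU, hUne, hm⟩ hB
    have := dense_of_mem_residual hm
    obtain ⟨x, hxU, hxc⟩ := this.inter_open_nonempty U hU hUne
    exact hxc hxU

/-- a remainder `Y` of a non-locally compact paratopological group cannot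
simultaneously be a Baire space and be meager in itself; equivalently (second conjunct),
a nonempty space fails the Baire property iff it has a nonempty open meager subset. -/
theorem stmt2 {G B : Type*} [TopologicalSpace G] [T35Space G] [Group G] [ContinuousMul G]
    [TopologicalSpace B] [CompactSpace B] [T2Space B]
    (hnlc : ¬ LocallyCompactSpace G)
    (e : G → B) (he : Topology.IsEmbedding e) (hd : DenseRange e)
    {X : Type*} [TopologicalSpace X] [T35Space X] [Nonempty X] :
    ¬ (BaireSpace ((Set.range e)ᶜ : Set B) ∧
        IsMeagre (Set.univ : Set ((Set.range e)ᶜ : Set B))) ∧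
      ((¬ BaireSpace X) ↔ ∃ U : Set X, IsOpen U ∧ U.Nonempty ∧ IsMeagre U) := by
  constructor
  · rintro ⟨hB, hm⟩
    -- the remainder is nonempty
    have hne : Nonempty ((Set.range e)ᶜ : Set B) := by
      by_contra h
      rw [not_nonempty_iff, isEmpty_coe_sort, compl_empty_iff] at h
      have hce : Topology.IsClosedEmbedding e :=
        ⟨he, by rw [h]; exact isClosed_univ⟩
      exact hnlc hce.locallyCompactSpace
    have hdense := dense_of_mem_residual hm
    rw [compl_univ] at hdense
    obtain ⟨x, -, hx⟩ := hdense.inter_open_nonempty univ isOpen_univ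
      (univ_nonempty)
    exact hx
  · exact not_baire_iff_aux
end

section
/- If X is a Tychonoff space which is neither a Baire space nor meager, then X is not homeomorphic to a remainder bG \ G of any Hausdorff compactification bG of any non-locally compact paratopological group G. -/
open Set Topology Filter

universe u v


section transfer

variable {B : Type u} [TopologicalSpace B]

/-- If `(x, y)` is in the closure of the graph of `f` over `S`, and `x ∈ S` where `f` is
continuous on `S`, then `y = f x`. -/
lemma graph_closure_apply [T2Space B] {S : Set B} {f : B → B} (hf : ContinuousOn f S)
    {x y : B} (hxy : (x, y) ∈ closure ((fun z => (z, f z)) '' S)) (hx : x ∈ S) : y = f x := by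
  set Γ : Set (B × B) := (fun z => (z, f z)) '' S with hΓ
  have hne : (𝓝[Γ] (x, y)).NeBot := mem_closure_iff_nhdsWithin_neBot.1 hxy
  have hev : ∀ᶠ p in 𝓝[Γ] (x, y), p ∈ Γ := eventually_mem_nhdsWithin
  have hmem : ∀ p ∈ Γ, p.1 ∈ S ∧ p.2 = f p.1 := by
    rintro p ⟨z, hz, rfl⟩; exact ⟨hz, rfl⟩
  have h1 : Tendsto Prod.fst (𝓝[Γ] (x, y)) (𝓝 x) :=
    (continuous_fst.tendsto (x, y)).mono_left nhdsWithin_le_nhds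
  have h2 : Tendsto Prod.fst (𝓝[Γ] (x, y)) (𝓝[S] x) :=
    tendsto_nhdsWithin_iff.2 ⟨h1, hev.mono fun p hp => (hmem p hp).1⟩
  have h3 : Tendsto (fun p : B × B => f p.1) (𝓝[Γ] (x, y)) (𝓝 (f x)) :=
    Filter.Tendsto.comp (hf x hx : Tendsto f (𝓝[S] x) (𝓝 (f x))) h2
  have h4 : Tendsto Prod.snd (𝓝[Γ] (x, y)) (𝓝 y) :=
    (continuous_snd.tendsto (x, y)).mono_left nhdsWithin_le_nhds
  have h5 : Tendsto (fun p : B × B => f p.1) (𝓝[Γ] (x, y)) (𝓝 y) :=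
    Filter.Tendsto.congr' (hev.mono fun p hp => (hmem p hp).2) h4
  exact tendsto_nhds_unique h5 h3

/-- Transfer of the property "being the intersection of one's closure with a countable family
of open sets" along a partial homeomorphism of a compact Hausdorff space. -/
lemma gdelta_transfer [CompactSpace B] [T2Space B] {S : Set B} (f g : B → B)
    (hfc : ContinuousOn f S) (hgc : ContinuousOn g (f '' S))
    (hgf : ∀ x ∈ S, g (f x) = x) (O : ℕ → Set B) (hO : ∀ n, IsOpen (O n))
    (hS : S = closure S ∩ ⋂ n, O n) :
    ∃ O' : ℕ → Set B, (∀ n, IsOpen (O' n)) ∧ f '' S = closure (f '' S) ∩ ⋂ n, O' n := by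
  set T : Set B := f '' S with hTdef
  set Γ : Set (B × B) := (fun z => (z, f z)) '' S with hΓ
  set K : Set (B × B) := closure Γ with hK
  have hKcl : IsClosed K := isClosed_closure
  have hKcp : IsCompact K := hKcl.isCompact
  -- claim 1
  have claim1 : ∀ x y : B, (x, y) ∈ K → x ∈ S → y = f x := fun x y hxy hx =>
    graph_closure_apply hfc hxy hx
  -- claim 2
  have hΓswap : (Prod.swap '' Γ : Set (B × B)) = (fun z => (z, g z)) '' T := by
    ext p
    constructor
    · rintro ⟨q, ⟨z, hz, rfl⟩, rfl⟩
      exact ⟨f z, ⟨z, hz, rfl⟩, by simp [hgf z hz]⟩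
    · rintro ⟨y, ⟨z, hz, rfl⟩, rfl⟩
      exact ⟨(z, f z), ⟨z, hz, rfl⟩, by simp [hgf z hz]⟩
  have claim2 : ∀ x y : B, (x, y) ∈ K → y ∈ T → x = g y := by
    intro x y hxy hy
    have hswap : (y, x) ∈ closure ((fun z => (z, g z)) '' T) := by
      rw [← hΓswap]
      exact image_closure_subset_closure_image continuous_swap ⟨(x, y), hxy, rfl⟩
    exact graph_closure_apply hgc hswap hy
  -- define the new open sets
  set C : ℕ → Set (B × B) := fun n => K ∩ Prod.fst ⁻¹' (O n)ᶜ with hC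
  have hCcp : ∀ n, IsCompact (C n) :=
    fun n => hKcp.inter_right (((hO n).isClosed_compl).preimage continuous_fst)
  refine ⟨fun n => (Prod.snd '' C n)ᶜ, fun n =>
    (((hCcp n).image continuous_snd).isClosed).isOpen_compl, ?_⟩
  have hfstK : ∀ p ∈ K, p.1 ∈ closure S := by
    intro p hp
    have : Prod.fst '' K ⊆ closure (Prod.fst '' Γ) :=
      (image_closure_subset_closure_image continuous_fst : Prod.fst '' closure Γ ⊆ _)
    have hfst : Prod.fst '' Γ = S := by
      ext z; constructor
      · rintro ⟨q, ⟨w, hw, rfl⟩, rfl⟩; exact hw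
      · intro hz; exact ⟨(z, f z), ⟨z, hz, rfl⟩, rfl⟩
    have := this ⟨p, hp, rfl⟩
    rwa [hfst] at this
  have hTK : closure T ⊆ Prod.snd '' K := by
    have h1 : T ⊆ Prod.snd '' K := by
      rintro y ⟨z, hz, rfl⟩
      exact ⟨(z, f z), subset_closure ⟨z, hz, rfl⟩, rfl⟩
    have h2 : IsClosed (Prod.snd '' K) := ((hKcp.image continuous_snd).isClosed)
    exact closure_minimal h1 h2
  ext y
  constructor
  · intro hy
    refine ⟨subset_closure hy, ?_⟩
    rw [mem_iInter]
    intro n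
    rintro ⟨p, ⟨hpK, hp1⟩, rfl⟩
    have hx : p.1 = g p.2 := claim2 p.1 p.2 (by simpa using hpK) hy
    obtain ⟨z, hz, hfz⟩ := hy
    have hgS : g p.2 ∈ S := by rw [← hfz, hgf z hz]; exact hz
    have hmem2 : p.1 ∈ closure S ∩ ⋂ n, O n := by
      rw [← hS, hx]; exact hgS
    exact hp1 (mem_iInter.1 hmem2.2 n)
  · rintro ⟨hyc, hyO⟩
    obtain ⟨p, hpK, hp2⟩ := hTK hyc
    by_cases hp1 : p.1 ∈ S
    · have : p.2 = f p.1 := claim1 p.1 p.2 (by simpa using hpK) hp1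
      rw [← hp2, this]
      exact ⟨p.1, hp1, rfl⟩
    · exfalso
      have hcl : p.1 ∈ closure S := hfstK p hpK
      have : p.1 ∉ ⋂ n, O n := fun h => hp1 (hS ▸ ⟨hcl, h⟩)
      obtain ⟨n, hn⟩ := by
        rw [mem_iInter] at this; push_neg at this; exact this
      have : y ∈ Prod.snd '' C n := ⟨p, ⟨hpK, hn⟩, hp2⟩
      exact (mem_iInter.1 hyO n) this

end transfer

lemma core {B : Type u} [TopologicalSpace B] [CompactSpace B] [T2Space B] {G' : Set B}
    (hGd : Dense G') (hYd : Dense G'ᶜ)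
    (homog : ∀ p ∈ G', ∀ q ∈ G', ∃ f g : B → B, ContinuousOn f G' ∧ ContinuousOn g G' ∧
      MapsTo f G' G' ∧ MapsTo g G' G' ∧ (∀ x ∈ G', g (f x) = x) ∧ (∀ y ∈ G', f (g y) = y) ∧
      f p = q)
    (hnb : ¬ BaireSpace ↥(G'ᶜ)) : IsMeagre G'ᶜ := by
  classical
  have hnb' : ¬ ∀ (D : ℕ → Set ↥(G'ᶜ)), (∀ n, IsOpen (D n)) → (∀ n, Dense (D n)) →
      Dense (⋂ n, D n) := fun H => hnb ⟨H⟩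
  push_neg at hnb'
  obtain ⟨D, hDo, hDd, hDnd⟩ := hnb'
  rw [dense_iff_inter_open] at hDnd
  push_neg at hDnd
  obtain ⟨U, hUo, hUne, hUdisj⟩ := hDnd
  obtain ⟨V', hV'o, hV'pre⟩ := isOpen_induced_iff.1 hUo
  choose E hEo hEpre using fun n => isOpen_induced_iff.1 (hDo n)
  -- each E n is dense in B
  have hEd : ∀ n, Dense (E n) := by
    intro n
    rw [dense_iff_inter_open]
    intro N hNo hNne
    obtain ⟨z, hzN, hzY⟩ := hYd.inter_open_nonempty N hNo hNne
    have hsubo : IsOpen (Subtype.val ⁻¹' N : Set ↥(G'ᶜ)) := hNo.preimage continuous_subtype_val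
    obtain ⟨w, hw1, hw2⟩ := (hDd n).inter_open_nonempty _ hsubo ⟨⟨z, hzY⟩, hzN⟩
    refine ⟨(w : B), hw1, ?_⟩
    have : w ∈ Subtype.val ⁻¹' (E n) := by rw [hEpre n]; exact hw2
    exact this
  set P : Set B := V' ∩ ⋂ n, E n with hPdef
  have hPG : P ⊆ G' := by
    rintro x ⟨hxV, hxI⟩
    by_contra hxG
    have hx : (⟨x, hxG⟩ : ↥(G'ᶜ)) ∈ U ∩ ⋂ n, D n := by
      constructor
      · rw [← hV'pre]; exact hxV
      · rw [mem_iInter]; intro n; rw [← hEpre n]; exact mem_iInter.1 hxI n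
    rw [hUdisj] at hx; exact hx
  have hV'ne : V'.Nonempty := by
    obtain ⟨u, hu⟩ := hUne
    rw [← hV'pre] at hu
    exact ⟨(u : B), hu⟩
  have hIE : Dense (⋂ n, E n) := dense_iInter_of_isOpen hEo hEd
  have hPd : V' ⊆ closure P := hIE.open_subset_closure_inter hV'o
  have hPeq : P = closure P ∩ ⋂ n, (V' ∩ E n) := by
    apply Subset.antisymm
    · intro x hx
      exact ⟨subset_closure hx, mem_iInter.2 fun n => ⟨hx.1, mem_iInter.1 hx.2 n⟩⟩
    · rintro x ⟨-, hx⟩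
      exact ⟨(mem_iInter.1 hx 0).1, mem_iInter.2 fun n => (mem_iInter.1 hx n).2⟩
  set Good : Set B → Prop := fun W => IsOpen W ∧ W.Nonempty ∧ ∃ S : Set B, ∃ O : ℕ → Set B,
    S ⊆ G' ∧ S ⊆ W ∧ W ⊆ closure S ∧ (∀ n, IsOpen (O n)) ∧ S = closure S ∩ ⋂ n, O n
    with hGoodDef
  -- step 2 : every nonempty open set contains a good open subset
  have step2 : ∀ W₀ : Set B, IsOpen W₀ → W₀.Nonempty → ∃ W, Good W ∧ W ⊆ W₀ := by
    intro W₀ hW₀o hW₀ne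
    obtain ⟨q, hqW₀, hqG⟩ := hGd.inter_open_nonempty W₀ hW₀o hW₀ne
    obtain ⟨p₀, hp₀V, hp₀P⟩ : (V' ∩ P).Nonempty := by
      obtain ⟨v, hv⟩ := hV'ne
      exact mem_closure_iff.1 (hPd hv) V' hV'o hv
    have hp₀G : p₀ ∈ G' := hPG hp₀P
    obtain ⟨f, g, hfc, hgc, hfm, hgm, hgf, hfg, hfp⟩ := homog p₀ hp₀G q hqG
    have hfPG : f '' P ⊆ G' := by
      rintro y ⟨x, hx, rfl⟩; exact hfm (hPG hx)
    obtain ⟨O₁, hO₁o, hT₀⟩ := gdelta_transfer f g (hfc.mono hPG) (hgc.mono hfPG)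
      (fun x hx => hgf x (hPG hx)) _ (fun n => hV'o.inter (hEo n)) hPeq
    obtain ⟨E₁, hE₁o, hE₁⟩ := (continuousOn_iff'.1 hgc) V' hV'o
    set W : Set B := E₁ ∩ W₀ with hWdef
    have hWo : IsOpen W := hE₁o.inter hW₀o
    have hqE₁ : q ∈ E₁ ∩ G' := by
      rw [← hE₁]
      refine ⟨?_, hqG⟩
      show g q ∈ V'
      rw [← hfp, hgf p₀ hp₀G]
      exact hp₀V
    have hqW : q ∈ W := ⟨hqE₁.1, hqW₀⟩
    set S : Set B := (f '' P) ∩ W with hSdef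
    have hSG : S ⊆ G' := fun y hy => hfPG hy.1
    have hWcl : W ⊆ closure S := by
      intro x hx
      rw [mem_closure_iff]
      intro N hNo hxN
      set N' : Set B := N ∩ W with hN'def
      have hN'o : IsOpen N' := hNo.inter hWo
      have hxN' : x ∈ N' := ⟨hxN, hx⟩
      obtain ⟨y', hy'N', hy'G⟩ := hGd.inter_open_nonempty N' hN'o ⟨x, hxN'⟩
      have hgy'V : g y' ∈ V' := by
        have h1 : y' ∈ g ⁻¹' V' ∩ G' := by rw [hE₁]; exact ⟨hy'N'.2.1, hy'G⟩
        exact h1.1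
      obtain ⟨E₂, hE₂o, hE₂⟩ := (continuousOn_iff'.1 hfc) N' hN'o
      have hgy'E₂ : g y' ∈ E₂ ∩ G' := by
        rw [← hE₂]
        refine ⟨?_, hgm hy'G⟩
        show f (g y') ∈ N'
        rw [hfg y' hy'G]
        exact hy'N'
      obtain ⟨x₂, hx₂EV, hx₂P⟩ := mem_closure_iff.1 (hPd hgy'V) (E₂ ∩ V')
        (hE₂o.inter hV'o) ⟨hgy'E₂.1, hgy'V⟩
      have hx₂G : x₂ ∈ G' := hPG hx₂P
      have hfx₂N' : f x₂ ∈ N' := by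
        have h2 : x₂ ∈ f ⁻¹' N' ∩ G' := by rw [hE₂]; exact ⟨hx₂EV.1, hx₂G⟩
        exact h2.1
      exact ⟨f x₂, hfx₂N'.1, ⟨⟨x₂, hx₂P, rfl⟩, hfx₂N'.2⟩⟩
    have hSeq : S = closure S ∩ ⋂ n, (O₁ n ∩ W) := by
      apply Subset.antisymm
      · intro y hy
        refine ⟨subset_closure hy, mem_iInter.2 fun n => ⟨?_, hy.2⟩⟩
        have h3 : y ∈ closure (f '' P) ∩ ⋂ n, O₁ n := by rw [← hT₀]; exact hy.1
        exact mem_iInter.1 h3.2 n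
      · rintro y ⟨hyc, hyI⟩
        have hyW : y ∈ W := (mem_iInter.1 hyI 0).2
        have hyT : y ∈ f '' P := by
          rw [hT₀]
          exact ⟨(closure_mono inter_subset_left) hyc,
            mem_iInter.2 fun n => (mem_iInter.1 hyI n).1⟩
        exact ⟨hyT, hyW⟩
    exact ⟨W, ⟨hWo, ⟨q, hqW⟩, S, fun n => O₁ n ∩ W, hSG, fun y hy => hy.2, hWcl,
      fun n => (hO₁o n).inter hWo, hSeq⟩, inter_subset_right⟩
  -- Zorn
  set 𝒮 : Set (Set (Set B)) := {F | (∀ W ∈ F, Good W) ∧ F.Pairwise Disjoint} with h𝒮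
  obtain ⟨F₀, hF₀⟩ := zorn_subset 𝒮 (by
    intro c hc hchain
    refine ⟨⋃₀ c, ⟨?_, ?_⟩, fun s hs => subset_sUnion_of_mem hs⟩
    · rintro W ⟨F, hF, hWF⟩
      exact (hc hF).1 W hWF
    · rintro a ⟨Fa, hFa, haF⟩ b ⟨Fb, hFb, hbF⟩ hab
      rcases hchain.total hFa hFb with h | h
      · exact (hc hFb).2 (h haF) hbF hab
      · exact (hc hFa).2 haF (h hbF) hab)
  have hF₀mem : F₀ ∈ 𝒮 := hF₀.prop
  have hUd : Dense (⋃₀ F₀) := by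
    rw [dense_iff_inter_open]
    by_contra h
    push_neg at h
    obtain ⟨W₀, hW₀o, hW₀ne, hW₀disj⟩ := h
    obtain ⟨W, hWGood, hWsub⟩ := step2 W₀ hW₀o hW₀ne
    have hWnotin : W ∉ F₀ := by
      intro hmem
      obtain ⟨w, hw⟩ := hWGood.2.1
      have h4 : w ∈ W₀ ∩ ⋃₀ F₀ := ⟨hWsub hw, W, hmem, hw⟩
      rw [hW₀disj] at h4; exact h4
    have hnew : insert W F₀ ∈ 𝒮 := by
      constructor
      · intro W' hW'
        rcases mem_insert_iff.1 hW' with rfl | hW'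
        · exact hWGood
        · exact hF₀mem.1 W' hW'
      · intro a ha b hb hab
        rcases mem_insert_iff.1 ha with rfl | ha' <;> rcases mem_insert_iff.1 hb with rfl | hb'
        · exact absurd rfl hab
        · refine Set.disjoint_left.2 fun z hza hzb => ?_
          have h5 : z ∈ W₀ ∩ ⋃₀ F₀ := ⟨hWsub hza, b, hb', hzb⟩
          rw [hW₀disj] at h5; exact h5
        · refine Set.disjoint_left.2 fun z hza hzb => ?_
          have h5 : z ∈ W₀ ∩ ⋃₀ F₀ := ⟨hWsub hzb, a, ha', hza⟩
          rw [hW₀disj] at h5; exact h5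
        · exact hF₀mem.2 ha' hb' hab
    have h6 := hF₀.2 hnew (subset_insert W F₀)
    exact hWnotin (h6 (mem_insert W F₀))
  have hGoodF : ∀ W ∈ F₀, ∃ S : Set B, ∃ O : ℕ → Set B, S ⊆ G' ∧ S ⊆ W ∧ W ⊆ closure S ∧
      (∀ n, IsOpen (O n)) ∧ S = closure S ∩ ⋂ n, O n := fun W hW => (hF₀mem.1 W hW).2.2
  choose! SS OO hSG' hSW hWclS hOopen hSeq using hGoodF
  set A : ℕ → Set B := fun n => ⋃ W ∈ F₀, (W \ OO W n) with hAdef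
  have hAnwd : ∀ n, IsNowhereDense (A n) := by
    intro n
    rw [IsNowhereDense]
    by_contra hne
    rw [← Ne, ← nonempty_iff_ne_empty] at hne
    obtain ⟨z, hzN, hzU⟩ : (interior (closure (A n)) ∩ ⋃₀ F₀).Nonempty :=
      hUd.inter_open_nonempty _ isOpen_interior hne
    obtain ⟨W, hWF, hzW⟩ := hzU
    set M : Set B := interior (closure (A n)) ∩ W with hMdef
    have hMo : IsOpen M := isOpen_interior.inter (hF₀mem.1 W hWF).1
    have hMne : z ∈ M := ⟨hzN, hzW⟩
    have hMsub : M ⊆ closure (W \ OO W n) := by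
      intro u hu
      rw [mem_closure_iff]
      intro Nu hNuo hNu
      obtain ⟨v, hv1, hv2⟩ : ((Nu ∩ M) ∩ A n).Nonempty :=
        mem_closure_iff.1 (interior_subset hu.1) (Nu ∩ M) (hNuo.inter hMo) ⟨hNu, hu⟩
      obtain ⟨W', hvW'1, hW'F, hvW'2⟩ : ∃ W', v ∈ W' ∧ W' ∈ F₀ ∧ v ∉ OO W' n := by
        simpa [hAdef] using hv2
      have hvW' : v ∈ W' \ OO W' n := ⟨hvW'1, hvW'2⟩
      have hWW' : W' = W := by
        by_contra hne'
        exact (hF₀mem.2 hW'F hWF hne').le_bot ⟨hvW'.1, hv1.2.2⟩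
      refine ⟨v, hv1.1, ?_⟩
      rw [← hWW']; exact hvW'
    obtain ⟨w, hwM, hwS⟩ : (M ∩ SS W).Nonempty :=
      mem_closure_iff.1 (hWclS W hWF hzW) M hMo hMne
    have hwO : w ∈ OO W n := by
      have h7 : w ∈ closure (SS W) ∩ ⋂ m, OO W m := by rw [← hSeq W hWF]; exact hwS
      exact mem_iInter.1 h7.2 n
    have hwW : w ∈ W := hSW W hWF hwS
    obtain ⟨t, ht1, ht2⟩ := mem_closure_iff.1 (hMsub hwM) (W ∩ OO W n)
      ((hF₀mem.1 W hWF).1.inter (hOopen W hWF n)) ⟨hwW, hwO⟩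
    exact ht2.2 ht1.2
  rw [isMeagre_iff_countable_union_isNowhereDense]
  refine ⟨insert (⋃₀ F₀)ᶜ (Set.range A), ?_, ?_, ?_⟩
  · intro t ht
    rcases mem_insert_iff.1 ht with rfl | ⟨n, rfl⟩
    · have hcl : IsClosed (⋃₀ F₀)ᶜ :=
        (isOpen_sUnion fun W hW => (hF₀mem.1 W hW).1).isClosed_compl
      rw [hcl.isNowhereDense_iff, interior_compl, hUd.closure_eq, compl_univ]
    · exact hAnwd _
  · exact (countable_range A).insert _
  · intro y hy
    by_cases hyU : y ∈ ⋃₀ F₀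
    · obtain ⟨W, hWF, hyW⟩ := hyU
      have hyS : y ∉ SS W := fun h => hy (hSG' W hWF h)
      have hyO : ∃ n, y ∉ OO W n := by
        by_contra h
        push_neg at h
        exact hyS (by rw [hSeq W hWF]; exact ⟨hWclS W hWF hyW, mem_iInter.2 h⟩)
      obtain ⟨n, hn⟩ := hyO
      exact ⟨A n, mem_insert_of_mem _ ⟨n, rfl⟩, mem_biUnion hWF ⟨hyW, hn⟩⟩
    · exact ⟨(⋃₀ F₀)ᶜ, mem_insert _ _, hyU⟩

lemma dense_image_homeo {A : Type u} {C : Type v} [TopologicalSpace A] [TopologicalSpace C]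
    (φ : A ≃ₜ C) {s : Set A} (hs : Dense s) : Dense (φ '' s) := by
  rw [dense_iff_closure_eq, ← φ.image_closure, hs.closure_eq, image_univ, φ.surjective.range_eq]

lemma baireSpace_of_homeomorph {A : Type u} {C : Type v} [TopologicalSpace A] [TopologicalSpace C]
    (φ : A ≃ₜ C) (hC : BaireSpace C) : BaireSpace A := by
  haveI := hC
  constructor
  intro f ho hd
  have h1 : Dense (⋂ n, φ '' f n) :=
    dense_iInter_of_isOpen (fun n => φ.isOpenMap _ (ho n)) (fun n => dense_image_homeo φ (hd n))
  rw [← image_iInter φ.bijective] at h1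
  have h3 := dense_image_homeo φ.symm h1
  rwa [Set.image_image, show (fun x => φ.symm (φ x)) = id from funext fun x => φ.symm_apply_apply x,
    Set.image_id] at h3

lemma isMeagre_univ_of_homeomorph {A : Type u} {C : Type v} [TopologicalSpace A]
    [TopologicalSpace C] (φ : A ≃ₜ C) (h : IsMeagre (univ : Set C)) :
    IsMeagre (univ : Set A) := by
  rw [isMeagre_iff_countable_union_isNowhereDense] at h ⊢
  obtain ⟨S, hnwd, hcnt, hsub⟩ := h
  refine ⟨(fun t => φ ⁻¹' t) '' S, ?_, hcnt.image _, ?_⟩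
  · rintro t ⟨t', ht', rfl⟩
    have h5 := hnwd t' ht'
    rw [IsNowhereDense] at h5 ⊢
    rw [← φ.preimage_closure, ← φ.preimage_interior, h5, preimage_empty]
  · intro x _
    obtain ⟨t, htS, hxt⟩ := hsub (mem_univ (φ x))
    exact ⟨φ ⁻¹' t, ⟨t, htS, rfl⟩, hxt⟩

lemma isMeagre_univ_subtype {B : Type u} [TopologicalSpace B] {Y : Set B} (hYd : Dense Y)
    (h : IsMeagre Y) : IsMeagre (univ : Set ↥Y) := by
  rw [isMeagre_iff_countable_union_isNowhereDense] at h ⊢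
  obtain ⟨S, hnwd, hcnt, hsub⟩ := h
  refine ⟨(fun t => (Subtype.val ⁻¹' t : Set ↥Y)) '' S, ?_, hcnt.image _, ?_⟩
  · rintro t ⟨t', ht', rfl⟩
    rw [IsNowhereDense, ← not_nonempty_iff_eq_empty]
    rintro ⟨x, hx⟩
    rw [mem_interior_iff_mem_nhds, nhds_subtype_eq_comap, Filter.mem_comap] at hx
    obtain ⟨V, hV, hVsub⟩ := hx
    obtain ⟨V', hV'sub, hV'o, hV'x⟩ := mem_nhds_iff.1 hV
    have hVY : V' ∩ Y ⊆ closure t' := by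
      rintro z ⟨hzV, hzY⟩
      have hz : (⟨z, hzY⟩ : ↥Y) ∈ closure (Subtype.val ⁻¹' t' : Set ↥Y) :=
        hVsub (hV'sub hzV)
      rw [closure_subtype] at hz
      exact closure_mono (image_preimage_subset _ _) hz
    have hV'cl : V' ⊆ closure t' :=
      (hYd.open_subset_closure_inter hV'o).trans
        ((closure_mono hVY).trans (by rw [closure_closure]))
    have : (x : B) ∈ interior (closure t') :=
      mem_interior.2 ⟨V', hV'cl, hV'o, hV'x⟩
    rw [hnwd t' ht'] at this
    exact this
  · rintro ⟨y, hy⟩ _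
    obtain ⟨t, htS, hyt⟩ := hsub hy
    exact ⟨Subtype.val ⁻¹' t, ⟨t, htS, rfl⟩, hyt⟩

/-- a Tychonoff space which is neither Baire nor meager in itself is not
homeomorphic to a remainder of any Hausdorff compactification of any non-locally compact
paratopological group. -/
theorem stmt3 {X : Type u} [TopologicalSpace X] [T35Space X]
    (h1 : ¬ BaireSpace X) (h2 : ¬ IsMeagre (Set.univ : Set X)) :
    ¬ ∃ (G : Type u) (tG : TopologicalSpace G) (gG : Group G) (B : Type u)
        (tB : TopologicalSpace B) (e : G → B), by
        haveI := tG; haveI := gG; haveI := tB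
        exact ContinuousMul G ∧ T35Space G ∧ ¬ LocallyCompactSpace G ∧
          CompactSpace B ∧ T2Space B ∧ Topology.IsEmbedding e ∧ DenseRange e ∧
          Nonempty (X ≃ₜ ((Set.range e)ᶜ : Set B)) := by
  rintro ⟨G, tG, gG, B, tB, e, hCM, hT35G, hnLC, hCB, hT2B, hEmb, hDR, ⟨φX⟩⟩
  haveI := hCM; haveI := hT35G; haveI := hCB; haveI := hT2B
  set G' : Set B := Set.range e with hG'def
  have hGd : Dense G' := hDR
  -- the remainder is dense, else G would be locally compact
  have hYd : Dense G'ᶜ := by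
    by_contra hnd
    rw [dense_iff_inter_open] at hnd
    push_neg at hnd
    obtain ⟨V, hVo, hVne, hVdisj⟩ := hnd
    have hVG : V ⊆ G' := by
      intro v hv
      by_contra hvG
      have : v ∈ V ∩ G'ᶜ := ⟨hv, hvG⟩
      rw [hVdisj] at this; exact this
    obtain ⟨x, hx⟩ := hVne
    obtain ⟨M, hM, hMcl, hMsub⟩ := exists_mem_nhds_isClosed_subset (hVo.mem_nhds hx)
    have hMG : M ⊆ G' := hMsub.trans hVG
    have hMcp : IsCompact M := hMcl.isCompact
    obtain ⟨x₀, rfl⟩ : x ∈ G' := hVG hx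
    have hpre_nhds : e ⁻¹' M ∈ nhds x₀ := hEmb.continuous.continuousAt.preimage_mem_nhds hM
    have hpre_cp : IsCompact (e ⁻¹' M) := by
      have himg : e '' (e ⁻¹' M) = M := by
        apply Subset.antisymm (image_preimage_subset e M)
        intro m hm
        obtain ⟨z, rfl⟩ := hMG hm
        exact ⟨z, hm, rfl⟩
      rw [hEmb.isCompact_iff, himg]
      exact hMcp
    haveI : WeaklyLocallyCompactSpace G := by
      constructor
      intro g
      refine ⟨(Homeomorph.mulLeft (g * x₀⁻¹)) '' (e ⁻¹' M),
        hpre_cp.image (Homeomorph.mulLeft _).continuous, ?_⟩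
      have hmem : (Homeomorph.mulLeft (g * x₀⁻¹)) '' (e ⁻¹' M) ∈
          nhds ((Homeomorph.mulLeft (g * x₀⁻¹)) x₀) :=
        (Homeomorph.mulLeft (g * x₀⁻¹)).map_nhds_eq x₀ ▸ image_mem_map hpre_nhds
      simpa [inv_mul_cancel_right] using hmem
    exact hnLC inferInstance
  -- homogeneity data
  haveI : Nonempty G := ⟨1⟩
  set gi : B → G := Function.invFun e with hgi_def
  have hgie : ∀ z : G, gi (e z) = z := fun z => Function.leftInverse_invFun hEmb.injective z
  have hgi : ∀ x ∈ G', e (gi x) = x := fun x hx => Function.invFun_eq hx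
  have hgiC : ContinuousOn gi G' := by
    rintro x ⟨x₀, rfl⟩
    have ht : Tendsto gi (𝓝[Set.range e] (e x₀)) (𝓝 x₀) := by
      rw [← hEmb.map_nhds_eq, tendsto_map'_iff]
      have hid : (gi ∘ e) = id := funext hgie
      rw [hid]
      exact tendsto_id
    simpa [ContinuousWithinAt, hgie x₀] using ht
  have homog : ∀ p ∈ G', ∀ q ∈ G', ∃ f g : B → B, ContinuousOn f G' ∧ ContinuousOn g G' ∧
      MapsTo f G' G' ∧ MapsTo g G' G' ∧ (∀ x ∈ G', g (f x) = x) ∧ (∀ y ∈ G', f (g y) = y) ∧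
      f p = q := by
    intro p hp q hq
    set c : G := gi q * (gi p)⁻¹ with hc
    have hcont : ∀ d : G, ContinuousOn (fun x => e (d * gi x)) G' := by
      intro d
      exact hEmb.continuous.comp_continuousOn
        ((continuous_const.mul continuous_id).comp_continuousOn hgiC)
    refine ⟨fun x => e (c * gi x), fun x => e (c⁻¹ * gi x), hcont c, hcont c⁻¹,
      fun x _ => mem_range_self _, fun x _ => mem_range_self _, ?_, ?_, ?_⟩
    · intro x hx; simp only [hgie, inv_mul_cancel_left]; exact hgi x hx
    · intro y hy; simp only [hgie, mul_inv_cancel_left]; exact hgi y hy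
    · show e (gi q * (gi p)⁻¹ * gi p) = q
      rw [inv_mul_cancel_right]
      exact hgi q hq
  have hnbY : ¬ BaireSpace ↥(G'ᶜ) := fun hB => h1 (baireSpace_of_homeomorph φX hB)
  have hmeagre := core hGd hYd homog hnbY
  have hY : IsMeagre (univ : Set ↥(G'ᶜ)) := isMeagre_univ_subtype hYd hmeagre
  exact h2 (isMeagre_univ_of_homeomorph φX hY)
end

section
/- If X is a Tychonoff space which is neither a Baire space nor Lindelöf, then X is not homeomorphic to a remainder of any Hausdorff compactification of any non-locally compact paratopological group. -/
open Set Topology Filter Pointwise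

universe u

section AuxLemmas

/-- Baire transfers along a homeomorphism. -/
lemma baireSpace_of_homeomorph_s4 {X Y : Type*} [TopologicalSpace X] [TopologicalSpace Y]
    (h : X ≃ₜ Y) [BaireSpace Y] : BaireSpace X := by
  constructor
  intro f ho hd
  have himg : ∀ s : Set X, Dense s → Dense (h '' s) := by
    intro s hs
    rw [dense_iff_closure_eq, ← h.image_closure, dense_iff_closure_eq.1 hs, Set.image_univ,
      h.surjective.range_eq]
  have himg' : ∀ s : Set Y, Dense s → Dense (h.symm '' s) := by
    intro s hs
    rw [dense_iff_closure_eq, ← h.symm.image_closure, dense_iff_closure_eq.1 hs, Set.image_univ,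
      h.symm.surjective.range_eq]
  have key : Dense (⋂ n, h '' f n) :=
    dense_iInter_of_isOpen (fun n => h.isOpenMap _ (ho n)) (fun n => himg _ (hd n))
  have : h.symm '' (⋂ n, h '' f n) = ⋂ n, f n := by
    rw [Set.image_iInter h.symm.bijective]
    refine iInter_congr fun n => ?_
    rw [← Set.image_comp]
    simp
  simpa [this] using himg' _ key

/-- A Wallace-type lemma from joint continuity of multiplication. -/
lemma wallace_aux {G : Type*} [TopologicalSpace G] [Mul G] [ContinuousMul G]
    {f : G} {K U : Set G} (hK : IsCompact K) (hU : IsOpen U)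
    (h : ∀ k ∈ K, f * k ∈ U) :
    ∃ A Bs : Set G, IsOpen A ∧ f ∈ A ∧ IsOpen Bs ∧ K ⊆ Bs ∧
      ∀ a ∈ A, ∀ b ∈ Bs, a * b ∈ U := by
  have hcont : IsOpen ((fun p : G × G => p.1 * p.2) ⁻¹' U) :=
    hU.preimage continuous_mul
  have step : ∀ k : K, ∃ A Bs : Set G, IsOpen A ∧ f ∈ A ∧ IsOpen Bs ∧ (k : G) ∈ Bs ∧
      ∀ a ∈ A, ∀ b ∈ Bs, a * b ∈ U := by
    rintro ⟨k, hk⟩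
    have : (f, k) ∈ (fun p : G × G => p.1 * p.2) ⁻¹' U := h k hk
    obtain ⟨A, Bs, hA, hBs, hfA, hkB, hsub⟩ := isOpen_prod_iff.1 hcont f k this
    exact ⟨A, Bs, hA, hfA, hBs, hkB, fun a ha b hb => hsub (Set.mk_mem_prod ha hb)⟩
  choose A Bs hA hfA hBs hkB hsub using step
  obtain ⟨t, ht⟩ := hK.elim_finite_subcover (fun k : K => Bs k)
    (fun k => hBs k) (fun x hx => Set.mem_iUnion.2 ⟨⟨x, hx⟩, hkB ⟨x, hx⟩⟩)
  refine ⟨⋂ k ∈ t, A k, ⋃ k ∈ t, Bs k, isOpen_biInter_finset (fun k _ => hA k),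
    Set.mem_iInter₂.2 (fun k _ => hfA k), isOpen_biUnion (fun k _ => hBs k), ht, ?_⟩
  intro a ha b hb
  obtain ⟨k, hk, hbk⟩ := Set.mem_iUnion₂.1 hb
  exact hsub k a (Set.mem_iInter₂.1 ha k hk) b hbk

/-- Key paratopological-group lemma: if `K` has countable (decreasing) neighborhood base
`W n` in `G` and `F` is compact, then `{F * W n}` is a neighborhood base of `F * K`. -/
lemma char_mul_compact {G : Type*} [TopologicalSpace G] [Mul G] [ContinuousMul G]
    {F K : Set G} (hF : IsCompact F) (hK : IsCompact K)
    {W : ℕ → Set G} (hWK : ∀ n, K ⊆ W n)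
    (hWdec : ∀ m n, m ≤ n → W n ⊆ W m)
    (hWbase : ∀ V : Set G, IsOpen V → K ⊆ V → ∃ n, W n ⊆ V)
    {U : Set G} (hU : IsOpen U) (hFKU : F * K ⊆ U) :
    ∃ n, F * W n ⊆ U := by
  by_contra hcon
  push_neg at hcon
  have hseq : ∀ n : ℕ, ∃ fw : G × G, fw.1 ∈ F ∧ fw.2 ∈ W n ∧ fw.1 * fw.2 ∉ U := by
    intro n
    obtain ⟨z, hz, hzU⟩ := Set.not_subset.1 (hcon n)
    obtain ⟨x, hx, y, hy, hxy⟩ := Set.mem_mul.1 hz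
    exact ⟨(x, y), hx, hy, by rw [hxy]; exact hzU⟩
  choose fw hfF hfW hfU using hseq
  set fs : ℕ → G := fun n => (fw n).1 with hfs
  have hle : Filter.map fs atTop ≤ 𝓟 F :=
    le_principal_iff.2 (Filter.mem_map.2 (Filter.Eventually.of_forall (fun n => hfF n)))
  obtain ⟨f, hfF', hcl⟩ := hF.exists_clusterPt hle
  obtain ⟨A, Bs, hA, hfA, hBs, hKB, hsub⟩ :=
    wallace_aux hK hU (fun k hk => hFKU (Set.mul_mem_mul hfF' hk))
  obtain ⟨m, hm⟩ := hWbase Bs hBs hKB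
  have hfreq : ∃ n, n ≥ m ∧ fs n ∈ A := by
    have h1 : A ∈ 𝓝 f := hA.mem_nhds hfA
    have h2 : fs '' Set.Ici m ∈ Filter.map fs atTop :=
      Filter.image_mem_map (Filter.mem_atTop m)
    obtain ⟨x, hxA, hxV⟩ := clusterPt_iff_nonempty.1 hcl h1 h2
    obtain ⟨n, hn, rfl⟩ := hxV
    exact ⟨n, hn, hxA⟩
  obtain ⟨n, hnm, hnA⟩ := hfreq
  exact hfU n (hsub _ hnA _ (hm (hWdec m n hnm (hfW n))))

variable {B : Type*} [TopologicalSpace B]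

/-- Transfer of countable character of a compact set from a dense subspace to the
whole compact Hausdorff space. -/
lemma char_transfer [CompactSpace B] [T2Space B]
    {Z C : Set B} (hZ : Dense Z) (hC : IsCompact C)
    {W : ℕ → Set B} (hWZ : ∀ n, W n ⊆ Z) (hCW : ∀ n, C ⊆ W n)
    (hWo : ∀ n, ∃ W' : Set B, IsOpen W' ∧ W n = W' ∩ Z)
    (hbase : ∀ V : Set B, IsOpen V → C ⊆ V → ∃ n, W n ⊆ V) :
    ∃ O : ℕ → Set B, (∀ n, IsOpen (O n)) ∧ (∀ n, C ⊆ O n) ∧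
      (∀ V : Set B, IsOpen V → C ⊆ V → ∃ n, O n ⊆ V) := by
  refine ⟨fun n => (closure (Z \ W n))ᶜ, fun n => isClosed_closure.isOpen_compl, ?_, ?_⟩
  · intro n x hx
    obtain ⟨W', hW'o, hWeq⟩ := hWo n
    have hxW : x ∈ W' := by
      have := hCW n hx; rw [hWeq] at this; exact this.1
    simp only [Set.mem_compl_iff]
    intro hxc
    obtain ⟨z, hz1, hz2⟩ := mem_closure_iff.1 hxc W' hW'o hxW
    exact hz2.2 (by rw [hWeq]; exact ⟨hz1, hz2.1⟩)
  · intro V hV hCV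
    obtain ⟨V₁, hV₁o, hCV₁, hclV₁⟩ :=
      normal_exists_closure_subset (hC.isClosed) hV hCV
    obtain ⟨n, hn⟩ := hbase V₁ hV₁o hCV₁
    refine ⟨n, ?_⟩
    intro x hx
    have hxcl : x ∈ closure ((closure (Z \ W n))ᶜ ∩ Z) :=
      hZ.open_subset_closure_inter isClosed_closure.isOpen_compl hx
    have hsub2 : (closure (Z \ W n))ᶜ ∩ Z ⊆ W n := by
      rintro z ⟨hz1, hz2⟩
      by_contra hzw
      exact hz1 (subset_closure ⟨hz2, hzw⟩)
    have : x ∈ closure (W n) := closure_mono hsub2 hxcl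
    exact hclV₁ (closure_mono hn this)

/-- Construction of a nonempty compact set with countable neighborhood base inside the
intersection of countably many dense open sets and a nonempty open set. -/
lemma exists_compact_with_base [CompactSpace B] [T2Space B]
    {P : ℕ → Set B} (hPo : ∀ n, IsOpen (P n)) (hPd : ∀ n, Dense (P n))
    {V' : Set B} (hV' : IsOpen V') (hV'ne : V'.Nonempty) :
    ∃ (K : Set B) (V : ℕ → Set B), K.Nonempty ∧ IsCompact K ∧ K ⊆ V' ∧ (∀ n, K ⊆ P n) ∧
      (∀ n, IsOpen (V n)) ∧ (∀ n, K ⊆ V n) ∧ (∀ m n, m ≤ n → V n ⊆ V m) ∧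
      (∀ U : Set B, IsOpen U → K ⊆ U → ∃ n, V n ⊆ U) := by
  have hD : Dense (⋂ n, P n) := dense_iInter_of_isOpen hPo hPd
  obtain ⟨x₀, hx₀V, hx₀P⟩ := hD.inter_open_nonempty V' hV' hV'ne
  have step : ∀ T : Set B, IsOpen T → x₀ ∈ T →
      ∃ Wn : Set B, IsOpen Wn ∧ x₀ ∈ Wn ∧ closure Wn ⊆ T := by
    intro T hT hx
    obtain ⟨Wn, hWo, hsub, hcl⟩ := normal_exists_closure_subset isClosed_singleton hT
      (by simpa using hx)
    exact ⟨Wn, hWo, by simpa using hsub, hcl⟩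
  choose! f hfo hfx hfc using step
  set V : ℕ → Set B := fun n => Nat.rec (f V') (fun n Vn => f (Vn ∩ P n)) n with hV
  have hV0 : V 0 = f V' := rfl
  have hVs : ∀ n, V (n + 1) = f (V n ∩ P n) := fun n => rfl
  have hinv : ∀ n, IsOpen (V n) ∧ x₀ ∈ V n := by
    intro n
    induction n with
    | zero => exact ⟨hfo V' hV' hx₀V, hfx V' hV' hx₀V⟩
    | succ n ih =>
      have ho : IsOpen (V n ∩ P n) := ih.1.inter (hPo n)
      have hx : x₀ ∈ V n ∩ P n := ⟨ih.2, by have := Set.mem_iInter.1 hx₀P n; exact this⟩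
      exact ⟨hfo _ ho hx, hfx _ ho hx⟩
  have hVo : ∀ n, IsOpen (V n) := fun n => (hinv n).1
  have hVx : ∀ n, x₀ ∈ V n := fun n => (hinv n).2
  have hcl0 : closure (V 0) ⊆ V' := hfc V' hV' hx₀V
  have hcls : ∀ n, closure (V (n + 1)) ⊆ V n ∩ P n := by
    intro n
    have ho : IsOpen (V n ∩ P n) := (hVo n).inter (hPo n)
    have hx : x₀ ∈ V n ∩ P n := ⟨hVx n, Set.mem_iInter.1 hx₀P n⟩
    exact hfc _ ho hx
  set K : Set B := ⋂ n, closure (V n) with hK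
  have hKV : ∀ n, K ⊆ V n := by
    intro n x hx
    exact (hcls n (Set.mem_iInter.1 hx (n + 1))).1
  have hdec : ∀ n, V (n + 1) ⊆ V n := fun n => fun x hx => (hcls n (subset_closure hx)).1
  have hdec' : ∀ m n, m ≤ n → V n ⊆ V m := by
    intro m n h
    induction h with
    | refl => exact subset_rfl
    | step h ih => exact fun x hx => ih (hdec _ hx)
  refine ⟨K, V, ⟨x₀, Set.mem_iInter.2 fun n => subset_closure (hVx n)⟩,
    (isClosed_iInter fun n => isClosed_closure).isCompact,
    fun x hx => hcl0 (Set.mem_iInter.1 hx 0),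
    fun n x hx => (hcls n (Set.mem_iInter.1 hx (n + 1))).2,
    hVo, hKV, hdec', ?_⟩
  intro U hU hKU
  by_contra hc
  push_neg at hc
  have hne : ∀ n, (closure (V n) \ U).Nonempty := by
    intro n
    obtain ⟨x, hx1, hx2⟩ := Set.not_subset.1
      (show ¬ closure (V n) ⊆ U from fun h => hc n (subset_closure.trans h))
    exact ⟨x, hx1, hx2⟩
  have hnested : ∀ n, closure (V (n + 1)) \ U ⊆ closure (V n) \ U := by
    intro n x hx
    exact ⟨subset_closure ((hcls n (hx.1)).1), hx.2⟩
  have := IsCompact.nonempty_iInter_of_sequence_nonempty_isCompact_isClosed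
    (fun n => closure (V n) \ U) hnested hne
    ((isClosed_closure.inter hU.isClosed_compl).isCompact)
    (fun n => isClosed_closure.inter hU.isClosed_compl)
  obtain ⟨x, hx⟩ := this
  have hxK : x ∈ K := Set.mem_iInter.2 fun n => (Set.mem_iInter.1 hx n).1
  exact (Set.mem_iInter.1 hx 0).2 (hKU hxK)

end AuxLemmas

/-- a Tychonoff space which is neither Baire nor Lindelöf is not
homeomorphic to a remainder of any Hausdorff compactification of any non-locally compact
paratopological group. -/
theorem stmt4 {X : Type u} [TopologicalSpace X] [T35Space X]
    (h1 : ¬ BaireSpace X) (h2 : ¬ LindelofSpace X) :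
    ¬ ∃ (G : Type u) (tG : TopologicalSpace G) (gG : Group G) (B : Type u)
        (tB : TopologicalSpace B) (e : G → B), by
        haveI := tG; haveI := gG; haveI := tB
        exact ContinuousMul G ∧ T35Space G ∧ ¬ LocallyCompactSpace G ∧
          CompactSpace B ∧ T2Space B ∧ Topology.IsEmbedding e ∧ DenseRange e ∧
          Nonempty (X ≃ₜ ((Set.range e)ᶜ : Set B)) := by
  rintro ⟨G, tG, gG, B, tB, e, hCM, hT35G, hnLC, hCB, hT2B, hemb, hdr, hNE⟩
  obtain ⟨φ⟩ := hNE
  set Y : Set B := (Set.range e)ᶜ with hYdef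
  -- transfer the hypotheses to the remainder Y
  have hB : ¬ BaireSpace ↥Y := fun h => h1 (@baireSpace_of_homeomorph_s4 _ _ _ _ φ h)
  have hL : ¬ LindelofSpace ↥Y := by
    intro h
    apply h2
    rw [← isLindelof_univ_iff]
    have := (isLindelof_univ (X := ↥Y)).image φ.symm.continuous
    rwa [Set.image_univ, φ.symm.surjective.range_eq] at this
  -- Step 1: Y is dense in B (since G is nowhere locally compact, by homogeneity)
  have hdY : Dense Y := by
    rw [dense_iff_inter_open]
    intro U hU hUne
    by_contra hem
    rw [Set.not_nonempty_iff_eq_empty] at hem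
    have hUr : U ⊆ Set.range e := by
      intro x hx
      by_contra hxr
      exact absurd hem (Set.Nonempty.ne_empty ⟨x, hx, hxr⟩)
    obtain ⟨b, hb⟩ := hUne
    obtain ⟨g₀, rfl⟩ := hUr hb
    obtain ⟨V₁, hV₁o, hbV₁, hclV₁⟩ := normal_exists_closure_subset isClosed_singleton hU
      (by simpa using hb)
    have hKb : IsCompact (closure V₁) := isClosed_closure.isCompact
    have hKbr : closure V₁ ⊆ Set.range e := hclV₁.trans hUr
    have hKG : IsCompact (e ⁻¹' closure V₁) := hemb.isInducing.isCompact_preimage' hKb hKbr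
    have hnbd : e ⁻¹' closure V₁ ∈ nhds g₀ := by
      have h1 : e ⁻¹' V₁ ∈ nhds g₀ := (hV₁o.preimage hemb.continuous).mem_nhds
        (by simpa using hbV₁)
      exact Filter.mem_of_superset h1 (Set.preimage_mono subset_closure)
    haveI : WeaklyLocallyCompactSpace G := by
      constructor
      intro g
      refine ⟨(Homeomorph.mulLeft (g * g₀⁻¹)) '' (e ⁻¹' closure V₁),
        hKG.image (Homeomorph.mulLeft (g * g₀⁻¹)).continuous, ?_⟩
      have := (Homeomorph.mulLeft (g * g₀⁻¹)).isOpenMap.image_mem_nhds hnbd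
      simpa [inv_mul_cancel_right] using this
    exact hnLC inferInstance
  -- Step 2: extract the failure of the Baire property on Y
  have hnB : ∃ f : ℕ → Set ↥Y, (∀ n, IsOpen (f n)) ∧ (∀ n, Dense (f n)) ∧
      ¬ Dense (⋂ n, f n) := by
    by_contra hcon
    push_neg at hcon
    exact hB ⟨fun f ho hd => hcon f ho hd⟩
  obtain ⟨f, hfo, hfd, hfnd⟩ := hnB
  have hUex : ∀ n, ∃ U : Set B, IsOpen U ∧ f n = Subtype.val ⁻¹' U := by
    intro n
    obtain ⟨U, hUo, hUeq⟩ := isOpen_induced_iff.1 (hfo n)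
    exact ⟨U, hUo, hUeq.symm⟩
  choose U hUo hUeq using hUex
  -- the dense open sets in B
  set Gn : ℕ → Set B := fun n => (closure (Y \ U n))ᶜ with hGn
  have hGo : ∀ n, IsOpen (Gn n) := fun n => isClosed_closure.isOpen_compl
  have hGd : ∀ n, Dense (Gn n) := by
    intro n
    rw [dense_iff_inter_open]
    intro W hWo hWne
    by_contra hem
    rw [Set.not_nonempty_iff_eq_empty] at hem
    have hWsub : W ⊆ closure (Y \ U n) := by
      intro x hx
      by_contra hxc
      exact absurd hem (Set.Nonempty.ne_empty ⟨x, hx, hxc⟩)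
    obtain ⟨y, hyW, hyY⟩ := hdY.inter_open_nonempty W hWo hWne
    have hy1 : (⟨y, hyY⟩ : ↥Y) ∈ closure (f n) := (hfd n) _
    have hy2 : y ∈ closure (Subtype.val '' (f n)) := closure_subtype.1 hy1
    have him : Subtype.val '' (f n) = Y ∩ U n := by
      rw [hUeq n, Subtype.image_preimage_coe]
    rw [him] at hy2
    obtain ⟨z, hzW, hzY, hzU⟩ := mem_closure_iff.1 hy2 W hWo hyW
    obtain ⟨w, hwU, hwY, hwnU⟩ := mem_closure_iff.1 (hWsub hzW) (U n) (hUo n) hzU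
    exact hwnU hwU
  -- the nonempty open set V' witnessing non-density
  have hpex : ∃ p : ↥Y, p ∉ closure (⋂ n, f n) := by
    by_contra hcc
    push_neg at hcc
    exact hfnd (fun x => hcc x)
  obtain ⟨p, hp⟩ := hpex
  rw [mem_closure_iff] at hp
  push_neg at hp
  obtain ⟨N, hNo, hpN, hNempty⟩ := hp
  obtain ⟨V', hV'o, hV'eq⟩ := isOpen_induced_iff.1 hNo
  have hpV' : (p : B) ∈ V' := by
    rw [← hV'eq] at hpN
    exact hpN
  have hV'ne : V'.Nonempty := ⟨p, hpV'⟩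
  have hNem : N ∩ ⋂ n, f n = ∅ := hNempty
  have hsub : V' ∩ ⋂ n, Gn n ⊆ Set.range e := by
    intro x hx
    by_contra hxY
    have hxY' : x ∈ Y := hxY
    have hxU : ∀ n, x ∈ U n := by
      intro n
      have hxG : x ∈ Gn n := Set.mem_iInter.1 hx.2 n
      by_contra hxu
      exact hxG (subset_closure ⟨hxY', hxu⟩)
    have hxf : (⟨x, hxY'⟩ : ↥Y) ∈ N ∩ ⋂ n, f n := by
      constructor
      · rw [← hV'eq]
        exact hx.1
      · exact Set.mem_iInter.2 fun n => by rw [hUeq n]; exact hxU n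
    rw [hNem] at hxf
    exact hxf
  -- Step 3: a nonempty compact set K ⊆ range e with countable neighborhood base in B
  obtain ⟨K, Vs, hKne, hKc, hKV', hKP, hVso, hKVs, hVsdec, hVsbase⟩ :=
    exists_compact_with_base hGo hGd hV'o hV'ne
  have hKr : K ⊆ Set.range e :=
    fun x hx => hsub ⟨hKV' hx, Set.mem_iInter.2 fun n => hKP n hx⟩
  -- pull back to G
  set K' : Set G := e ⁻¹' K with hK'
  have hK'c : IsCompact K' := hemb.isInducing.isCompact_preimage' hKc hKr
  have hK'ne : K'.Nonempty := by
    obtain ⟨k, hk⟩ := hKne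
    obtain ⟨g, rfl⟩ := hKr hk
    exact ⟨g, hk⟩
  obtain ⟨k₀, hk₀⟩ := hK'ne
  set W' : ℕ → Set G := fun n => e ⁻¹' (Vs n) with hW'
  have hW'o : ∀ n, IsOpen (W' n) := fun n => (hVso n).preimage hemb.continuous
  have hKW' : ∀ n, K' ⊆ W' n := fun n x hx => hKVs n hx
  have hW'dec : ∀ m n, m ≤ n → W' n ⊆ W' m := fun m n h x hx => hVsdec m n h hx
  have hW'base : ∀ V : Set G, IsOpen V → K' ⊆ V → ∃ n, W' n ⊆ V := by
    intro V hV hKV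
    obtain ⟨V'', hV''o, hV''eq⟩ := hemb.isInducing.isOpen_iff.1 hV
    have hKV'' : K ⊆ V'' := by
      intro k hk
      obtain ⟨g, rfl⟩ := hKr hk
      have hg1 : g ∈ K' := hk
      have hg2 : g ∈ V := hKV hg1
      rw [← hV''eq] at hg2
      exact hg2
    obtain ⟨n, hn⟩ := hVsbase V'' hV''o hKV''
    refine ⟨n, ?_⟩
    rw [← hV''eq]
    exact fun x hx => hn hx
  -- Step 4: Y is Lindelöf
  have hYlin : IsLindelof Y := by
    rw [isLindelof_iff_countable_subcover]
    intro ι Ucov hUcov hYcov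
    set F : Set B := (⋃ i, Ucov i)ᶜ with hF
    have hFc : IsCompact F := (isClosed_compl_iff.2 (isOpen_iUnion hUcov)).isCompact
    have hFr : F ⊆ Set.range e := by
      intro x hx
      by_contra hxY
      exact hx (hYcov hxY)
    set F' : Set G := e ⁻¹' F with hF'
    have hF'c : IsCompact F' := hemb.isInducing.isCompact_preimage' hFc hFr
    set F₂ : Set G := (fun x => x * k₀⁻¹) '' F' with hF₂
    have hF₂c : IsCompact F₂ := hF'c.image (continuous_mul_right _)
    have hC'c : IsCompact (F₂ * K') := hF₂c.mul hK'c
    have hF'C' : F' ⊆ F₂ * K' := by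
      intro x hx
      have hxeq : x = (x * k₀⁻¹) * k₀ := (inv_mul_cancel_right x k₀).symm
      rw [hxeq]
      exact Set.mul_mem_mul (Set.mem_image_of_mem _ hx) hk₀
    set C : Set B := e '' (F₂ * K') with hC
    have hCc : IsCompact C := hC'c.image hemb.continuous
    have hCr : C ⊆ Set.range e := Set.image_subset_range e _
    set Wb : ℕ → Set B := fun n => e '' (F₂ * W' n) with hWb
    have hWbZ : ∀ n, Wb n ⊆ Set.range e := fun n => Set.image_subset_range _ _
    have hCWb : ∀ n, C ⊆ Wb n := by
      intro n
      apply Set.image_mono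
      exact Set.mul_subset_mul_left (hKW' n)
    have hWbo : ∀ n, ∃ Wo : Set B, IsOpen Wo ∧ Wb n = Wo ∩ Set.range e := by
      intro n
      have hopen : IsOpen (F₂ * W' n) := (hW'o n).mul_left
      obtain ⟨Wo, hWoo, hWoeq⟩ := hemb.isInducing.isOpen_iff.1 hopen
      refine ⟨Wo, hWoo, ?_⟩
      rw [hWb]
      dsimp only
      rw [← hWoeq, Set.image_preimage_eq_inter_range]
    have hWbbase : ∀ V : Set B, IsOpen V → C ⊆ V → ∃ n, Wb n ⊆ V := by
      intro V hV hCV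
      have hC'V : F₂ * K' ⊆ e ⁻¹' V := by
        intro x hx
        exact hCV (Set.mem_image_of_mem e hx)
      obtain ⟨n, hn⟩ := char_mul_compact hF₂c hK'c hKW' hW'dec hW'base
        (hV.preimage hemb.continuous) hC'V
      exact ⟨n, Set.image_subset_iff.2 hn⟩
    obtain ⟨O, hOo, hCO, hObase⟩ := char_transfer hdr hCc hWbZ hCWb hWbo hWbbase
    have hFC : F ⊆ C := by
      intro x hx
      obtain ⟨g, rfl⟩ := hFr hx
      exact Set.mem_image_of_mem e (hF'C' hx)
    have hinterO : Y ⊆ ⋃ n, (O n)ᶜ := by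
      intro y hy
      rw [Set.mem_iUnion]
      by_contra hcc
      push_neg at hcc
      have hyO : ∀ n, y ∈ O n := by
        intro n
        have := hcc n
        simpa using this
      have hyC : y ∉ C := fun h => hy (hCr h)
      obtain ⟨U₁, U₂, hU₁o, hU₂o, hyU₁, hCU₂, hdis⟩ :=
        NormalSpace.normal {y} C isClosed_singleton hCc.isClosed
          (Set.disjoint_singleton_left.2 hyC)
      obtain ⟨n, hn⟩ := hObase U₂ hU₂o hCU₂
      exact Set.disjoint_left.1 hdis (hyU₁ rfl) (hn (hyO n))
    have hOcc : ∀ n, IsCompact (O n)ᶜ := fun n => (hOo n).isClosed_compl.isCompact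
    have hOcsub : ∀ n, (O n)ᶜ ⊆ ⋃ i, Ucov i := by
      intro n x hx
      by_contra hxc
      exact hx (hCO n (hFC hxc))
    have hfin : ∀ n, ∃ t : Finset ι, (O n)ᶜ ⊆ ⋃ i ∈ t, Ucov i :=
      fun n => (hOcc n).elim_finite_subcover Ucov hUcov (hOcsub n)
    choose t ht using hfin
    refine ⟨⋃ n, (t n : Set ι), Set.countable_iUnion (fun n => (t n).countable_toSet), ?_⟩
    intro y hy
    obtain ⟨n, hn⟩ := Set.mem_iUnion.1 (hinterO hy)
    obtain ⟨i, hi, hyi⟩ := Set.mem_iUnion₂.1 (ht n hn)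
    exact Set.mem_iUnion₂.2 ⟨i, Set.mem_iUnion.2 ⟨n, hi⟩, hyi⟩
  exact hL (isLindelof_univ_iff.1 (isLindelof_iff_isLindelof_univ.1 hYlin))
end

section
/- Every point-finite collection of non-empty open subsets of a ccc Baire space is countable. -/
open Set

/-- A space is ccc if every pairwise disjoint family of nonempty open sets is countable. -/
def CCC (X : Type*) [TopologicalSpace X] : Prop :=
  ∀ S : Set (Set X), (∀ U ∈ S, IsOpen U ∧ U.Nonempty) → S.PairwiseDisjoint id → S.Countable

/-- every point-finite collection of nonempty open subsets of a ccc Baire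
space is countable. -/
theorem stmt6 {X : Type*} [TopologicalSpace X] [BaireSpace X] (hccc : CCC X)
    (S : Set (Set X)) (hopen : ∀ U ∈ S, IsOpen U ∧ U.Nonempty)
    (hpf : ∀ x : X, {U ∈ S | x ∈ U}.Finite) :
    S.Countable := by
  classical
  -- family of nonempty open sets meeting only countably many members of S
  set 𝒲 : Set (Set X) :=
    {W | IsOpen W ∧ W.Nonempty ∧ {U ∈ S | (U ∩ W).Nonempty}.Countable} with h𝒲
  -- maximal pairwise disjoint subfamily
  obtain ⟨T, hTmax⟩ : ∃ T, Maximal (· ∈ {T : Set (Set X) |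
      T ⊆ 𝒲 ∧ T.PairwiseDisjoint id}) T := by
    apply zorn_subset
    intro c hc hchain
    refine ⟨⋃₀ c, ⟨?_, ?_⟩, fun s hs => subset_sUnion_of_mem hs⟩
    · intro T hT
      obtain ⟨t, ht, hTt⟩ := hT
      exact (hc ht).1 hTt
    · intro a ha b hb hab
      obtain ⟨ta, hta, hata⟩ := ha
      obtain ⟨tb, htb, hbtb⟩ := hb
      rcases hchain.total hta htb with h | h
      · exact (hc htb).2 (h hata) hbtb hab
      · exact (hc hta).2 hata (h hbtb) hab
  obtain ⟨⟨hT𝒲, hTdisj⟩, hTm⟩ := hTmax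
  have hTcount : T.Countable :=
    hccc T (fun W hW => ⟨(hT𝒲 hW).1, (hT𝒲 hW).2.1⟩) hTdisj
  -- ⋃₀ T is dense
  have hdense : Dense (⋃₀ T) := by
    by_contra hnd
    set V : Set X := (closure (⋃₀ T))ᶜ with hV
    have hVopen : IsOpen V := isClosed_closure.isOpen_compl
    have hVne : V.Nonempty := by
      rw [hV, nonempty_compl]
      intro h
      exact hnd (by rw [Dense, h]; simp)
    -- every nonempty open subset of V meets uncountably many members of S
    have huncount : ∀ O, IsOpen O → O.Nonempty → O ⊆ V →
        ¬ {U ∈ S | (U ∩ O).Nonempty}.Countable := by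
      intro O hO hOne hOV hcnt
      have hO𝒲 : O ∈ 𝒲 := ⟨hO, hOne, hcnt⟩
      have hOT : O ∉ T := by
        intro hOT
        have : O ⊆ closure (⋃₀ T) := (subset_sUnion_of_mem hOT).trans subset_closure
        obtain ⟨x, hx⟩ := hOne
        exact hOV hx (this hx)
      have hins : insert O T ∈ {T : Set (Set X) | T ⊆ 𝒲 ∧ T.PairwiseDisjoint id} := by
        constructor
        · exact insert_subset hO𝒲 hT𝒲
        · refine hTdisj.insert fun W hW _ => ?_
          have hWsub : W ⊆ closure (⋃₀ T) := (subset_sUnion_of_mem hW).trans subset_closure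
          exact Set.disjoint_left.2 fun x hxO hxW => hOV hxO (hWsub hxW)
      have := hTm hins (subset_insert O T) (mem_insert O T)
      exact hOT this
    -- chains of length n
    have hchainn : ∀ O, IsOpen O → O.Nonempty → O ⊆ V → ∀ n : ℕ,
        ∃ F : Finset (Set X), ↑F ⊆ S ∧ F.card = n ∧ (O ∩ ⋂₀ ↑F).Nonempty := by
      intro O hO hOne hOV n
      induction n with
      | zero => exact ⟨∅, by simp, by simp, by simpa using hOne⟩
      | succ n ih =>
        obtain ⟨F, hFS, hFcard, hFne⟩ := ih
        have hFopen : IsOpen (O ∩ ⋂₀ ↑F) :=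
          hO.inter (F.finite_toSet.isOpen_sInter fun U hU => (hopen U (hFS hU)).1)
        have hsubV : O ∩ ⋂₀ ↑F ⊆ V := (inter_subset_left).trans hOV
        have := huncount _ hFopen hFne hsubV
        have : ¬ {U ∈ S | (U ∩ (O ∩ ⋂₀ ↑F)).Nonempty} ⊆ ↑F := by
          intro hsub
          exact this ((F.finite_toSet.subset hsub).countable)
        obtain ⟨U, hU, hUF⟩ := not_subset.1 this
        refine ⟨insert U F, ?_, ?_, ?_⟩
        · rw [Finset.coe_insert]
          exact insert_subset hU.1 hFS
        · rw [Finset.card_insert_of_notMem hUF, hFcard]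
        · obtain ⟨x, hxU, hxO, hxF⟩ := hU.2
          refine ⟨x, hxO, ?_⟩
          rw [Finset.coe_insert, sInter_insert]
          exact ⟨hxU, hxF⟩
    -- the open dense sets
    set D : ℕ → Set X := fun n =>
      {x | ∃ F : Finset (Set X), ↑F ⊆ S ∧ n ≤ F.card ∧ x ∈ ⋂₀ (↑F : Set (Set X))} with hD
    have hDopen : ∀ n, IsOpen (D n) := by
      intro n
      rw [isOpen_iff_forall_mem_open]
      rintro x ⟨F, hFS, hFcard, hxF⟩
      exact ⟨⋂₀ ↑F, fun y hy => ⟨F, hFS, hFcard, hy⟩,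
        F.finite_toSet.isOpen_sInter fun U hU => (hopen U (hFS hU)).1, hxF⟩
    set E : ℕ → Set X := fun n => D n ∪ (closure V)ᶜ with hE
    have hEopen : ∀ n, IsOpen (E n) := fun n => (hDopen n).union isClosed_closure.isOpen_compl
    have hEdense : ∀ n, Dense (E n) := by
      intro n
      rw [dense_iff_inter_open]
      intro O hO hOne
      by_cases hOV : (O ∩ V).Nonempty
      · obtain ⟨F, hFS, hFcard, x, hxO, hxF⟩ :=
          hchainn (O ∩ V) (hO.inter hVopen) hOV inter_subset_right n
        exact ⟨x, hxO.1, Or.inl ⟨F, hFS, hFcard.ge, hxF⟩⟩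
      · obtain ⟨x, hx⟩ := hOne
        refine ⟨x, hx, Or.inr fun hxcl => ?_⟩
        have : O ∩ closure V ⊆ closure (O ∩ V) := hO.inter_closure
        rw [not_nonempty_iff_eq_empty.1 hOV, closure_empty] at this
        exact this ⟨hx, hxcl⟩
    have hdenseInter : Dense (⋂ n, E n) := dense_iInter_of_isOpen hEopen hEdense
    obtain ⟨x, hxV, hxE⟩ := dense_iff_inter_open.1 hdenseInter V hVopen hVne
    have hxD : ∀ n, x ∈ D n := by
      intro n
      have := mem_iInter.1 hxE n
      rcases this with h | h
      · exact h
      · exact absurd (subset_closure hxV) h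
    -- contradiction with point-finiteness
    have hfin := hpf x
    obtain ⟨F, hFS, hFcard, hxF⟩ := hxD (hfin.toFinset.card + 1)
    have hFsub : F ⊆ hfin.toFinset := by
      intro U hU
      rw [Finite.mem_toFinset]
      exact ⟨hFS hU, hxF U hU⟩
    have := Finset.card_le_card hFsub
    omega
  -- conclude countability
  have : S ⊆ ⋃ W ∈ T, {U ∈ S | (U ∩ W).Nonempty} := by
    intro U hU
    obtain ⟨hUopen, hUne⟩ := hopen U hU
    obtain ⟨x, hxU, hxT⟩ := dense_iff_inter_open.1 hdense U hUopen hUne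
    obtain ⟨W, hW, hxW⟩ := hxT
    exact mem_biUnion hW ⟨hU, x, hxU, hxW⟩
  exact ((hTcount.biUnion fun W hW => (hT𝒲 hW).2.2).mono this)
end

section
/- In the two-arrows space Z = X ∪ Y with X = {(x,0) : 0 < x ≤ 1} and Y = {(x,1) : 0 ≤ x < 1}, the subspace Y is a remainder of the Sorgenfrey-line-like subspace X, and Y admits a structure of a paratopological group: the operation (x,1)·(y,1) = (x+y mod 1, 1) (addition modulo 1) is jointly continuous on Y. -/
open Set

/-- The two-arrows (double arrow) space of Alexandroff and Urysohn, as the subset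
`{(x,0) : 0 < x ≤ 1} ∪ {(x,1) : 0 ≤ x < 1}` of `ℝ ×ₗ Bool` (with `false` playing the
role of `0` and `true` the role of `1`), equipped with its own order topology. -/
def DA : Type :=
  {p : ℝ ×ₗ Bool //
    ((ofLex p).2 = false ∧ 0 < (ofLex p).1 ∧ (ofLex p).1 ≤ 1) ∨
    ((ofLex p).2 = true ∧ 0 ≤ (ofLex p).1 ∧ (ofLex p).1 < 1)}

noncomputable instance : LinearOrder DA :=
  inferInstanceAs (LinearOrder {p : ℝ ×ₗ Bool //
    ((ofLex p).2 = false ∧ 0 < (ofLex p).1 ∧ (ofLex p).1 ≤ 1) ∨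
    ((ofLex p).2 = true ∧ 0 ≤ (ofLex p).1 ∧ (ofLex p).1 < 1)})

/-- The order topology on the two-arrows space. -/
noncomputable instance : TopologicalSpace DA := Preorder.topology DA

instance : OrderTopology DA := ⟨rfl⟩

/-- The lower arrow `X = {(x,0) : 0 < x ≤ 1}`. -/
def DAX : Set DA := {p | (ofLex p.1).2 = false}

/-- The upper arrow `Y = {(x,1) : 0 ≤ x < 1}`. -/
def DAY : Set DA := {p | (ofLex p.1).2 = true}

/-- Addition modulo 1 on the upper arrow `Y`. -/
noncomputable def DAYmul (u v : DAY) : DAY :=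
  ⟨⟨toLex (Int.fract ((ofLex u.1.1).1 + (ofLex v.1.1).1), true),
    Or.inr ⟨rfl, Int.fract_nonneg _, Int.fract_lt_one _⟩⟩, rfl⟩

namespace DAhelp

/-- first (real) coordinate -/
def F (p : DA) : ℝ := (ofLex p.1).1

/-- second (Bool) coordinate -/
def B (p : DA) : Bool := (ofLex p.1).2

lemma F_nonneg (p : DA) : 0 ≤ F p := by
  rcases p.2 with ⟨_, h, _⟩ | ⟨_, h, _⟩
  · exact h.le
  · exact h

lemma F_le_one (p : DA) : F p ≤ 1 := by
  rcases p.2 with ⟨_, _, h⟩ | ⟨_, _, h⟩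
  · exact h
  · exact h.le

lemma F_pos_of_false (p : DA) (h : B p = false) : 0 < F p := by
  rcases p.2 with ⟨_, h1, _⟩ | ⟨h1, _, _⟩
  · exact h1
  · rw [B, h1] at h; exact absurd h (by simp)

lemma F_lt_one_of_true (p : DA) (h : B p = true) : F p < 1 := by
  rcases p.2 with ⟨h1, _, _⟩ | ⟨_, _, h1⟩
  · rw [B, h1] at h; exact absurd h (by simp)
  · exact h1

lemma B_true_of_F_nonpos (p : DA) (h : F p ≤ 0) : B p = true := by
  rcases p.2 with ⟨_, h1, _⟩ | ⟨h1, _, _⟩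
  · exact absurd h (not_le.2 h1)
  · exact h1

lemma le_iff (p q : DA) : p ≤ q ↔ F p < F q ∨ (F p = F q ∧ B p ≤ B q) := by
  change p.1 ≤ q.1 ↔ _
  exact Prod.Lex.le_iff (x := p.1) (y := q.1)

lemma lt_iff (p q : DA) : p < q ↔ F p < F q ∨ (F p = F q ∧ B p < B q) := by
  change p.1 < q.1 ↔ _
  exact Prod.Lex.lt_iff (x := p.1) (y := q.1)

lemma F_mono {p q : DA} (h : p ≤ q) : F p ≤ F q := by
  rcases (le_iff p q).1 h with h | ⟨h, _⟩
  · exact h.le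
  · exact h.le

/-- element with label `false` -/
def mkF (x : ℝ) (h0 : 0 < x) (h1 : x ≤ 1) : DA := ⟨toLex (x, false), Or.inl ⟨rfl, h0, h1⟩⟩

/-- element with label `true` -/
def mkT (x : ℝ) (h0 : 0 ≤ x) (h1 : x < 1) : DA := ⟨toLex (x, true), Or.inr ⟨rfl, h0, h1⟩⟩

@[simp] lemma F_mkF (x : ℝ) (h0 h1) : F (mkF x h0 h1) = x := rfl
@[simp] lemma B_mkF (x : ℝ) (h0 h1) : B (mkF x h0 h1) = false := rfl
@[simp] lemma F_mkT (x : ℝ) (h0 h1) : F (mkT x h0 h1) = x := rfl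
@[simp] lemma B_mkT (x : ℝ) (h0 h1) : B (mkT x h0 h1) = true := rfl

lemma mkT_zero_le (q : DA) : mkT 0 le_rfl one_pos ≤ q := by
  rw [le_iff]
  rcases lt_or_ge 0 (F q) with h | h
  · exact Or.inl h
  · refine Or.inr ⟨?_, ?_⟩
    · rw [F_mkT]
      exact (le_antisymm h (F_nonneg q)).symm
    · rw [B_mkT, B_true_of_F_nonpos q h]

lemma bddAbove_F (s : Set DA) : BddAbove (F '' s) := by
  refine ⟨1, ?_⟩
  rintro _ ⟨p, _, rfl⟩
  exact F_le_one p

open Classical in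
/-- supremum on `DA` -/
noncomputable def daSup (s : Set DA) : DA :=
  if hs : s.Nonempty then
    have h1 : sSup (F '' s) ≤ 1 := csSup_le (hs.image F) (by rintro _ ⟨p, _, rfl⟩; exact F_le_one p)
    have h0 : 0 ≤ sSup (F '' s) :=
      le_trans (F_nonneg hs.choose) (le_csSup (bddAbove_F s) ⟨hs.choose, hs.choose_spec, rfl⟩)
    if h : ∃ p ∈ s, F p = sSup (F '' s) ∧ B p = true then
      mkT (sSup (F '' s)) h0
        (by obtain ⟨p, _, hp1, hp2⟩ := h; rw [← hp1]; exact F_lt_one_of_true p hp2)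
    else
      mkF (sSup (F '' s))
        (by
          by_cases hat : ∃ p ∈ s, F p = sSup (F '' s)
          · obtain ⟨p, hps, hp⟩ := hat
            have hb : B p = false := by
              cases hBp : B p
              · rfl
              · exact absurd ⟨p, hps, hp, hBp⟩ h
            rw [← hp]; exact F_pos_of_false p hb
          · rcases lt_or_ge 0 (sSup (F '' s)) with hh | hh
            · exact hh
            · exfalso
              obtain ⟨p, hp⟩ := hs
              have h2 : F p ≤ sSup (F '' s) := le_csSup (bddAbove_F s) ⟨p, hp, rfl⟩
              have h3 : sSup (F '' s) = 0 := le_antisymm hh h0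
              exact hat ⟨p, hp, le_antisymm (h3 ▸ h2) (h3 ▸ F_nonneg p)⟩)
        h1
  else mkT 0 le_rfl one_pos

noncomputable instance : SupSet DA := ⟨daSup⟩

lemma isLUB_daSup (s : Set DA) : IsLUB s (daSup s) := by
  unfold daSup
  split_ifs with hs h
  · constructor
    · intro q hq
      rw [le_iff]
      rcases lt_or_eq_of_le (le_csSup (bddAbove_F s) ⟨q, hq, rfl⟩) with hh | hh
      · exact Or.inl hh
      · exact Or.inr ⟨hh, le_top⟩
    · intro u hu
      obtain ⟨p, hps, hp1, hp2⟩ := h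
      refine le_trans ?_ (hu hps)
      rw [le_iff]
      exact Or.inr ⟨by simp [hp1], by simp [hp2]⟩
  · constructor
    · intro q hq
      rw [le_iff]
      rcases lt_or_eq_of_le (le_csSup (bddAbove_F s) ⟨q, hq, rfl⟩) with hh | hh
      · exact Or.inl hh
      · refine Or.inr ⟨hh, ?_⟩
        have hb : B q = false := by
          cases hBq : B q
          · rfl
          · exact absurd ⟨q, hq, hh, hBq⟩ h
        simp [hb]
    · intro u hu
      have hF : sSup (F '' s) ≤ F u := by
        refine csSup_le (hs.image F) ?_
        rintro _ ⟨p, hp, rfl⟩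
        exact F_mono (hu hp)
      rw [le_iff]
      rcases lt_or_eq_of_le hF with hh | hh
      · exact Or.inl hh
      · exact Or.inr ⟨hh, by simp⟩
  · constructor
    · intro q hq
      exact absurd (⟨q, hq⟩ : s.Nonempty) hs
    · intro u _
      exact mkT_zero_le u

noncomputable instance : CompleteLattice DA :=
  { completeLatticeOfSup DA isLUB_daSup with
    sup := max
    inf := min
    le_sup_left := fun a b => le_max_left a b
    le_sup_right := fun a b => le_max_right a b
    sup_le := fun _ _ _ => max_le
    inf_le_left := fun a b => min_le_left a b
    inf_le_right := fun a b => min_le_right a b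
    le_inf := fun _ _ _ => le_min }

noncomputable instance : CompleteLinearOrder DA :=
  { (inferInstance : CompleteLattice DA),
    (inferInstance : LinearOrder DA),
    LinearOrder.toBiheytingAlgebra DA with }

lemma dense_DAX : Dense DAX := by
  intro p
  cases hB : B p
  · exact subset_closure hB
  · have hp1 : F p < 1 := F_lt_one_of_true p hB
    have hsub : {q : DA | B q = false ∧ F p < F q} ⊆ DAX := fun q hq => hq.1
    refine closure_mono hsub ?_
    refine IsGLB.mem_closure ?_ ⟨mkF 1 one_pos le_rfl, rfl, hp1⟩
    constructor
    · intro q hq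
      rw [le_iff]
      exact Or.inl hq.2
    · intro u hu
      by_contra hc
      rw [not_le] at hc
      have hFu : F p < F u := by
        rcases (lt_iff p u).1 hc with hh | ⟨_, hh⟩
        · exact hh
        · rw [hB] at hh; exact absurd hh (by simp)
      obtain ⟨y, hy1, hy2⟩ := exists_between hFu
      have hy0 : 0 < y := lt_of_le_of_lt (F_nonneg p) hy1
      have hyle : y ≤ 1 := le_of_lt (lt_of_lt_of_le hy2 (F_le_one u))
      have := F_mono (hu (show mkF y hy0 hyle ∈ _ from ⟨rfl, hy1⟩))
      rw [F_mkF] at this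
      exact absurd (lt_of_le_of_lt this hy2) (lt_irrefl _)

lemma isOpen_Ici_true (p : DA) (hp : B p = true) : IsOpen (Ici p) := by
  rcases lt_or_ge 0 (F p) with h0 | h0
  · have key : Ici p = Ioi (mkF (F p) h0 (F_le_one p)) := by
      ext q
      simp only [mem_Ici, mem_Ioi]
      rw [le_iff, lt_iff, hp, F_mkF, B_mkF]
      have hb : (true ≤ B q) ↔ (false < B q) := by cases B q <;> simp
      rw [hb]
    rw [key]
    exact isOpen_Ioi
  · have key : Ici p = univ := by
      refine eq_univ_of_forall fun q => ?_
      rw [mem_Ici, le_iff]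
      rcases lt_or_ge (F p) (F q) with h | h
      · exact Or.inl h
      · have e1 : F p = 0 := le_antisymm h0 (F_nonneg p)
        have e2 : F q = 0 := le_antisymm (by rw [← e1]; exact h) (F_nonneg q)
        exact Or.inr ⟨by rw [e1, e2], by rw [hp, B_true_of_F_nonpos q e2.le]⟩
    rw [key]
    exact isOpen_univ

lemma nhds_basis_DAY (u : ↑DAY) :
    (nhds u).HasBasis (fun δ : ℝ => 0 < δ)
      (fun δ => {q : ↑DAY | F u.1 ≤ F q.1 ∧ F q.1 < F u.1 + δ}) := by
  have hBu : B u.1 = true := u.2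
  have hu1 : F u.1 < 1 := F_lt_one_of_true u.1 hBu
  constructor
  intro t
  rw [nhds_subtype DAY u, Filter.mem_comap]
  constructor
  · rintro ⟨V, hV, hVt⟩
    have hex : ∃ w, u.1 < w := by
      refine ⟨mkF 1 one_pos le_rfl, ?_⟩
      rw [lt_iff, F_mkF]
      exact Or.inl hu1
    obtain ⟨b, hub, hIco⟩ := exists_Ico_subset_of_mem_nhds hV hex
    have hFb : F u.1 < F b := by
      rcases (lt_iff u.1 b).1 hub with h | ⟨_, h⟩
      · exact h
      · rw [hBu] at h; exact absurd h (by simp)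
    refine ⟨F b - F u.1, by linarith, ?_⟩
    rintro q ⟨hq1, hq2⟩
    refine hVt (hIco ⟨?_, ?_⟩)
    · rw [le_iff]
      rcases lt_or_eq_of_le hq1 with h | h
      · exact Or.inl h
      · have hBq : B q.1 = true := q.2
        exact Or.inr ⟨h, by rw [hBu, hBq]⟩
    · rw [lt_iff]
      exact Or.inl (by linarith)
  · rintro ⟨δ, hδ, hsub⟩
    set x' : ℝ := min (F u.1 + δ) 1 with hx'
    have hx'0 : 0 < x' := lt_min (lt_of_le_of_lt (F_nonneg u.1) (by linarith)) one_pos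
    have hx'1 : x' ≤ 1 := min_le_right _ _
    have hxx' : F u.1 < x' := lt_min (by linarith) hu1
    refine ⟨Ici u.1 ∩ Iio (mkF x' hx'0 hx'1), ?_, ?_⟩
    · refine IsOpen.mem_nhds (IsOpen.inter (isOpen_Ici_true u.1 hBu) isOpen_Iio) ?_
      refine ⟨self_mem_Ici, ?_⟩
      rw [mem_Iio, lt_iff, F_mkF]
      exact Or.inl hxx'
    · rintro q ⟨hq1, hq2⟩
      refine hsub ⟨F_mono hq1, ?_⟩
      have hlt : F q.1 < x' := by
        rcases (lt_iff q.1 (mkF x' hx'0 hx'1)).1 hq2 with h | ⟨_, h⟩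
        · exact h
        · have hBq : B q.1 = true := q.2
          rw [hBq, B_mkF] at h
          exact absurd h (by simp)
      exact lt_of_lt_of_le hlt (min_le_left _ _)

lemma cont_mul : Continuous (fun p : ↑DAY × ↑DAY => DAYmul p.1 p.2) := by
  rw [continuous_iff_continuousAt]
  rintro ⟨u, v⟩
  have hu := nhds_basis_DAY u
  have hv := nhds_basis_DAY v
  have hw := nhds_basis_DAY (DAYmul u v)
  rw [ContinuousAt, nhds_prod_eq]
  rw [Filter.HasBasis.tendsto_iff (hu.prod hv) hw]
  intro ε hε
  set x := F u.1 with hx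
  set y := F v.1 with hy
  have hzdef : F (DAYmul u v).1 = Int.fract (x + y) := rfl
  set z := Int.fract (x + y) with hz
  have hz1 : z < 1 := Int.fract_lt_one _
  have hz0 : 0 ≤ z := Int.fract_nonneg _
  set δ := min ε (1 - z) / 2 with hδdef
  have hδ : 0 < δ := by
    have hm : 0 < min ε (1 - z) := lt_min hε (by linarith)
    positivity
  refine ⟨(δ, δ), ⟨hδ, hδ⟩, ?_⟩
  rintro ⟨p, q⟩ ⟨⟨hp1, hp2⟩, hq1, hq2⟩
  have hfd : F (DAYmul p q).1 = Int.fract (F p.1 + F q.1) := rfl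
  set d : ℝ := F p.1 + F q.1 - (x + y) with hd
  have hd0 : 0 ≤ d := by simp only [hd]; linarith
  have hdlt : d < min ε (1 - z) := by
    have h2 : d < 2 * δ := by simp only [hd]; linarith
    simp only [hδdef] at h2
    linarith
  have hkey : Int.fract (F p.1 + F q.1) = z + d := by
    have heq : F p.1 + F q.1 = (z + d) + (⌊x + y⌋ : ℤ) := by
      simp only [hz, Int.fract]
      ring
    rw [heq, Int.fract_add_intCast]
    refine Int.fract_eq_self.2 ⟨by linarith, ?_⟩
    have h3 : d < 1 - z := lt_of_lt_of_le hdlt (min_le_right _ _)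
    linarith
  constructor
  · rw [hzdef, hfd, hkey]; linarith
  · rw [hzdef, hfd, hkey]
    have h4 : d < ε := lt_of_lt_of_le hdlt (min_le_left _ _)
    linarith

end DAhelp

/-- the two-arrows space `Z = X ∪ Y` is a Hausdorff compactification of the
Sorgenfrey-like arrow `X` (i.e. `Z` is compact Hausdorff and `X` is dense in it), `Y` is
the corresponding remainder `Z \ X`, and addition modulo 1 is jointly continuous on `Y`,
so `Y` admits a structure of a paratopological group. -/
theorem stmt8 :
    CompactSpace DA ∧ T2Space DA ∧ Dense DAX ∧ DAY = DAXᶜ ∧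
      Continuous (fun p : DAY × DAY => DAYmul p.1 p.2) := by
  refine ⟨inferInstance, inferInstance, DAhelp.dense_DAX, ?_, ?_⟩
  · ext p
    simp [DAX, DAY]
  · exact DAhelp.cont_mul
end

section
/- If bX is a Hausdorff compactification of X and the remainder Y = bX \ X fails the Baire property, witnessed by open sets U_n of Y with ⋂U_n not dense in Y, and V_n are open in bX with U_n = V_n ∩ Y, then there is a non-empty open U ⊆ bX with (⋂V_n) ∩ U ⊆ X, and the set (⋂V_n) ∩ U is a Čech-complete subspace of X. -/
open Set

universe u

/-- A Tychonoff space is Čech-complete if it embeds densely into a compact Hausdorff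
space as a Gδ subset. -/
def CechComplete (X : Type u) [TopologicalSpace X] : Prop :=
  ∃ (B : Type u) (tB : TopologicalSpace B) (e : X → B),
    CompactSpace B ∧ T2Space B ∧ Topology.IsEmbedding e ∧ DenseRange e ∧ IsGδ (Set.range e)

/-- Any countable intersection of open subsets of a compact Hausdorff space is
Čech-complete: take its closure as the compactification. -/
lemma aux_cech {B : Type u} [TopologicalSpace B] [CompactSpace B] [T2Space B] {S : Set B}
    (f : ℕ → Set B) (hf : ∀ n, IsOpen (f n)) (hSf : S = ⋂ n, f n) : CechComplete S := by
  refine ⟨closure S, inferInstance, Set.inclusion subset_closure, ?_, inferInstance,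
    Topology.IsEmbedding.inclusion _, ?_, ?_⟩
  · exact isCompact_iff_compactSpace.mp isClosed_closure.isCompact
  · intro x
    rw [closure_subtype]
    have : Subtype.val '' (range (Set.inclusion (subset_closure (s := S)))) = S := by
      ext y
      simp [Set.range_inclusion]
      intro h; exact subset_closure h
    rw [this]
    exact x.2
  · have hr : range (Set.inclusion (subset_closure (s := S))) = Subtype.val ⁻¹' S := by
      ext x; simp [Set.range_inclusion]
    rw [hr, hSf, preimage_iInter]
    exact IsGδ.iInter_of_isOpen fun n => (hf n).preimage continuous_subtype_val

/-- if `bX` is a Hausdorff compactification of `X` and the remainder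
`Y = bX \ X` fails the Baire property, witnessed by dense open sets `U n` of `Y` whose
intersection is not dense in `Y`, where `U n = V n ∩ Y` for open `V n ⊆ bX`, then there
is a nonempty open `W ⊆ bX` with `(⋂ n, V n) ∩ W ⊆ X`, and `(⋂ n, V n) ∩ W` is a
Čech-complete subspace. -/
theorem stmt16 {X B : Type u} [TopologicalSpace X] [T35Space X]
    [TopologicalSpace B] [CompactSpace B] [T2Space B]
    (e : X → B) (he : Topology.IsEmbedding e) (hd : DenseRange e)
    (U : ℕ → Set ((Set.range e)ᶜ : Set B))
    (hU : ∀ n, IsOpen (U n) ∧ Dense (U n)) (hnd : ¬ Dense (⋂ n, U n))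
    (V : ℕ → Set B) (hV : ∀ n, IsOpen (V n))
    (hUV : ∀ n, U n = Subtype.val ⁻¹' V n) :
    ∃ W : Set B, IsOpen W ∧ W.Nonempty ∧ (⋂ n, V n) ∩ W ⊆ Set.range e ∧
      CechComplete (((⋂ n, V n) ∩ W : Set B)) := by
  -- extract a nonempty open subset of the remainder disjoint from `⋂ U n`
  rw [dense_iff_inter_open] at hnd
  push_neg at hnd
  obtain ⟨O, hOopen, hOne, hOdisj⟩ := hnd
  obtain ⟨W, hWopen, hWO⟩ := isOpen_induced_iff.mp hOopen
  obtain ⟨y, hyO⟩ := hOne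
  have hWne : W.Nonempty := ⟨y, by rw [← hWO] at hyO; exact hyO⟩
  have hsub : (⋂ n, V n) ∩ W ⊆ Set.range e := by
    intro x ⟨hxV, hxW⟩
    by_contra hx
    have hxY : x ∈ (Set.range e)ᶜ := hx
    have hmem : (⟨x, hxY⟩ : ((Set.range e)ᶜ : Set B)) ∈ O ∩ ⋂ n, U n := by
      constructor
      · rw [← hWO]; exact hxW
      · refine mem_iInter.mpr fun n => ?_
        rw [hUV n]
        exact mem_iInter.mp hxV n
    rw [hOdisj] at hmem
    exact hmem
  refine ⟨W, hWopen, hWne, hsub, ?_⟩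
  refine aux_cech (fun n => V n ∩ W) (fun n => (hV n).inter hWopen) ?_
  ext x; simp only [mem_inter_iff, mem_iInter]; exact ⟨fun h i => ⟨h.1 i, h.2⟩, fun h => ⟨fun i => (h i).1, (h 0).2⟩⟩
end
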